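/- arXiv:2107.00461 — 6 statements merged into one kernel-verified Lean document; each statement's English description precedes it below -/
import Mathlib

section
/- For every finite sequence (a_1,…,a_t) of positive integers one has ⟨a_1,…,a_t⟩ ≥ (1/2)·Φ^t · ∏_{i : a_i > 1} (a_i/4), where the product runs over all indices i with a_i > 1 and Φ = (1+√5)/2. -/
/-- Head-recursion continuant helper. -/
def contAux : List ℕ → ℕ
  | [] => 1
  | [a] => a
  | a :: b :: l => a * contAux (b :: l) + contAux l

/-- The continuant `⟨a_1,…,a_t⟩`, satisfying `⟨⟩ = 1`, `⟨a⟩ = a` and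
`⟨a_1,…,a_t⟩ = a_t⟨a_1,…,a_{t-1}⟩ + ⟨a_1,…,a_{t-2}⟩`. -/
def cont (l : List ℕ) : ℕ := contAux l.reverse

noncomputable def Phi : ℝ := (1 + Real.sqrt 5) / 2

def prevC : List ℕ → ℕ
  | [] => 0
  | _ :: t => contAux t

lemma contAux_cons (a : ℕ) (m : List ℕ) :
    contAux (a :: m) = a * contAux m + prevC m := by
  cases m with
  | nil => simp [contAux, prevC]
  | cons b l => rfl

noncomputable def Pr (m : List ℕ) : ℝ :=
  ((m.filter (fun b => 1 < b)).map (fun b => (b : ℝ) / 4)).prod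

lemma Pr_nil : Pr [] = 1 := by simp [Pr]

lemma Pr_cons (a : ℕ) (m : List ℕ) :
    Pr (a :: m) = (if 1 < a then (a : ℝ) / 4 else 1) * Pr m := by
  by_cases h : 1 < a <;> simp [Pr, List.filter_cons, h]

lemma Pr_append (s t : List ℕ) : Pr (s ++ t) = Pr s * Pr t := by
  simp [Pr, List.filter_append]

lemma Pr_reverse (l : List ℕ) : Pr l.reverse = Pr l := by
  induction l with
  | nil => rfl
  | cons a m ih =>
    rw [List.reverse_cons, Pr_append, ih, Pr_cons, Pr_cons, Pr_nil]
    ring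

lemma Pr_pos (m : List ℕ) : 0 < Pr m := by
  induction m with
  | nil => simp [Pr_nil]
  | cons a m ih =>
    rw [Pr_cons]
    split
    · positivity
    · simpa using ih

lemma sqrt5_sq : Real.sqrt 5 ^ 2 = 5 := Real.sq_sqrt (by norm_num)

lemma sqrt5_nonneg : (0:ℝ) ≤ Real.sqrt 5 := Real.sqrt_nonneg 5

lemma Phi_pos : 0 < Phi := by
  unfold Phi; positivity

lemma Phi_le_two : Phi ≤ 2 := by
  unfold Phi
  nlinarith [sqrt5_sq, sqrt5_nonneg]

lemma Phi_sq : Phi ^ 2 = Phi + 1 := by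
  unfold Phi
  nlinarith [sqrt5_sq]

lemma key (m : List ℕ) (hpos : ∀ b ∈ m, 0 < b) :
    (contAux m : ℝ) ≥ 1 / 2 * Phi ^ m.length * Pr m ∧
    ((contAux m : ℝ) + prevC m) ≥ 1 / 2 * Phi ^ (m.length + 1) * Pr m := by
  induction m with
  | nil =>
    simp only [contAux, prevC, Pr_nil, List.length_nil, pow_zero, pow_one]
    constructor
    · norm_num
    · push_cast
      nlinarith [Phi_le_two]
  | cons a m ih =>
    have ha : 0 < a := hpos a (by simp)
    obtain ⟨ihA, ihB⟩ := ih (fun b hb => hpos b (by simp [hb]))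
    have hq : (0:ℝ) < Phi ^ m.length := pow_pos Phi_pos _
    have hPr : 0 < Pr m := Pr_pos m
    have hx : (0:ℝ) ≤ (contAux m : ℝ) := by positivity
    have hy : (0:ℝ) ≤ (prevC m : ℝ) := by positivity
    rw [contAux_cons]
    have hlen : (a :: m).length = m.length + 1 := rfl
    rw [hlen, Pr_cons]
    have hprev : prevC (a :: m) = contAux m := rfl
    rw [hprev]
    have hp1 : Phi ^ (m.length + 1) = Phi * Phi ^ m.length := by ring
    have hp2 : Phi ^ (m.length + 1 + 1) = (Phi + 1) * Phi ^ m.length := by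
      rw [show m.length + 1 + 1 = m.length + 2 from rfl, pow_add, ← Phi_sq]; ring
    rw [hp1] at ihB
    by_cases h1 : 1 < a
    · -- a ≥ 2
      have ha2 : (2:ℝ) ≤ (a:ℝ) := by exact_mod_cast h1
      rw [if_pos h1, hp1, hp2]
      have hPhi2 : Phi ≤ 2 := Phi_le_two
      have hPhi0 : 0 < Phi := Phi_pos
      push_cast
      have hann : (0:ℝ) ≤ (a:ℝ) * (Phi ^ m.length * Pr m) := by positivity
      have t1 : Phi * ((a:ℝ) * (Phi ^ m.length * Pr m)) ≤ 4 * ((a:ℝ) * (Phi ^ m.length * Pr m)) :=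
        mul_le_mul_of_nonneg_right (by linarith) hann
      have t1' : (Phi + 1) * ((a:ℝ) * (Phi ^ m.length * Pr m)) ≤ 4 * ((a:ℝ) * (Phi ^ m.length * Pr m)) :=
        mul_le_mul_of_nonneg_right (by linarith) hann
      have t2 : (a:ℝ) * (1 / 2 * Phi ^ m.length * Pr m) ≤ (a:ℝ) * (contAux m : ℝ) :=
        mul_le_mul_of_nonneg_left ihA (by linarith)
      constructor
      · linarith [t1, t2]
      · linarith [t1', t2]
    · -- a = 1
      have ha1 : a = 1 := by omega
      subst ha1
      rw [if_neg h1, hp1, hp2]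
      push_cast
      constructor
      · nlinarith [ihB]
      · nlinarith [ihA, ihB]

/-- For positive integers `a_1,…,a_t` one has
`⟨a_1,…,a_t⟩ ≥ (1/2) Φ^t ∏_{i : a_i > 1} (a_i / 4)`. -/
theorem stmt4 (l : List ℕ) (hpos : ∀ b ∈ l, 0 < b) :
    (cont l : ℝ) ≥
      1 / 2 * Phi ^ l.length * ((l.filter (fun b => 1 < b)).map (fun b => (b : ℝ) / 4)).prod := by
  have h := (key l.reverse (fun b hb => hpos b (List.mem_reverse.mp hb))).1
  have hlen : l.reverse.length = l.length := List.length_reverse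
  rw [cont]
  rw [hlen, Pr_reverse] at h
  simpa [Pr] using h
end

section
/- Let x ∈ (0,1) be irrational and suppose that the derivative ?'(x) of the Minkowski question-mark function exists at x and equals 0. Then there exists T such that for all positive integers t > T one has S_x(t) − κ₁·t > 0. -/
open Filter Topology

/-- `S_x(t) = a_1 + ⋯ + a_t` where `a i` denotes `a_{i+1}`. -/
def cfSum (a : ℕ → ℕ) (t : ℕ) : ℕ := ∑ i ∈ Finset.range t, a i

/-- `x = [0;a_1,a_2,…]`: all partial quotients are positive and the convergents
`⟨a_2,…,a_t⟩ / ⟨a_1,…,a_t⟩` tend to `x`. -/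
def IsCFOf (x : ℝ) (a : ℕ → ℕ) : Prop :=
  (∀ i, 0 < a i) ∧
  Filter.Tendsto
    (fun t => ((cont (((List.range t).map a).tail) : ℝ) / (cont ((List.range t).map a) : ℝ)))
    Filter.atTop (nhds x)

noncomputable def kappa1 : ℝ := 2 * Real.log Phi / Real.log 2
noncomputable def kappa4 : ℝ := Real.sqrt ((kappa1 - 1) / Real.log 2)

/-- `Q` is the Minkowski question-mark function: continuous and strictly increasing on `[0,1]`,
`Q 0 = 0`, `Q 1 = 1`, and given on irrationals by the Denjoy–Salem series. -/
def IsMinkowski (Q : ℝ → ℝ) : Prop :=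
  ContinuousOn Q (Set.Icc 0 1) ∧ StrictMonoOn Q (Set.Icc 0 1) ∧
  Q 0 = 0 ∧ Q 1 = 1 ∧
  ∀ x ∈ Set.Ioo (0:ℝ) 1, Irrational x → ∀ a : ℕ → ℕ, IsCFOf x a →
    Q x = ∑' k : ℕ, (-1 : ℝ) ^ k * (2 : ℝ) ^ ((1 : ℤ) - (cfSum a (k+1) : ℤ))

namespace S6

def qd (c : ℕ → ℕ) (n : ℕ) : ℕ := cont ((List.range n).map c)
def pd (c : ℕ → ℕ) (n : ℕ) : ℕ := cont (((List.range n).map c).tail)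

lemma reverse_succ (c : ℕ → ℕ) (n : ℕ) :
    ((List.range (n+1)).map c).reverse = c n :: ((List.range n).map c).reverse := by
  rw [List.range_succ]; simp

lemma qd_zero (c : ℕ → ℕ) : qd c 0 = 1 := rfl
lemma qd_one (c : ℕ → ℕ) : qd c 1 = c 0 := rfl

lemma qd_rec (c : ℕ → ℕ) (n : ℕ) : qd c (n+2) = c (n+1) * qd c (n+1) + qd c n := by
  unfold qd cont
  rw [reverse_succ c (n+1), reverse_succ c n]
  rfl

lemma pd_succ (c : ℕ → ℕ) (n : ℕ) : pd c (n+1) = qd (fun i => c (i+1)) n := by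
  unfold pd qd
  rw [List.range_succ_eq_map]
  simp only [List.map_cons, List.tail_cons, List.map_map]
  rfl

lemma pd_zero (c : ℕ → ℕ) : pd c 0 = 1 := rfl
lemma pd_one (c : ℕ → ℕ) : pd c 1 = 1 := by rw [pd_succ]; rfl
lemma pd_two (c : ℕ → ℕ) : pd c 2 = c 1 := by rw [pd_succ]; rfl

lemma pd_rec (c : ℕ → ℕ) (n : ℕ) : pd c (n+3) = c (n+2) * pd c (n+2) + pd c (n+1) := by
  rw [pd_succ, pd_succ, pd_succ, qd_rec]

lemma qd_pos (c : ℕ → ℕ) (hc : ∀ i, 0 < c i) : ∀ n, 0 < qd c n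
  | 0 => by rw [qd_zero]; norm_num
  | 1 => by rw [qd_one]; exact hc 0
  | (n+2) => by
      rw [qd_rec]
      exact Nat.lt_of_lt_of_le (qd_pos c hc n) (Nat.le_add_left _ _)

lemma qd_mono (c : ℕ → ℕ) (hc : ∀ i, 0 < c i) : ∀ n, qd c n ≤ qd c (n+1)
  | 0 => by rw [qd_zero, qd_one]; exact hc 0
  | (n+1) => by
      rw [qd_rec]
      calc qd c (n+1) ≤ c (n+1) * qd c (n+1) := Nat.le_mul_of_pos_left _ (hc (n+1))
      _ ≤ _ := Nat.le_add_right _ _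

lemma qd_mono' (c : ℕ → ℕ) (hc : ∀ i, 0 < c i) : Monotone (qd c) :=
  monotone_nat_of_le_succ (qd_mono c hc)

lemma two_qd_le (c : ℕ → ℕ) (hc : ∀ i, 0 < c i) (n : ℕ) : 2 * qd c n ≤ qd c (n+2) := by
  rw [qd_rec]
  have h1 : qd c n ≤ c (n+1) * qd c (n+1) :=
    le_trans (qd_mono c hc n) (Nat.le_mul_of_pos_left _ (hc (n+1)))
  omega

end S6


namespace S6

lemma sqrt5_sq : Real.sqrt 5 ^ 2 = 5 := Real.sq_sqrt (by norm_num)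

lemma sqrt5_ge : (2:ℝ) ≤ Real.sqrt 5 := by
  nlinarith [sqrt5_sq, Real.sqrt_nonneg 5]

lemma sqrt5_le : Real.sqrt 5 ≤ 3 := by
  nlinarith [sqrt5_sq, Real.sqrt_nonneg 5]

lemma one_lt_phi : 1 < Phi := by unfold Phi; nlinarith [sqrt5_ge]
lemma phi_pos : 0 < Phi := lt_trans one_pos one_lt_phi
lemma phi_le_two : Phi ≤ 2 := by unfold Phi; nlinarith [sqrt5_le]
lemma phi_sq : Phi ^ 2 = Phi + 1 := by
  unfold Phi; linear_combination sqrt5_sq / 4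

lemma qd_ge_phi (c : ℕ → ℕ) (hc : ∀ i, 0 < c i) : ∀ n, Phi ^ n ≤ Phi * (qd c n : ℝ)
  | 0 => by rw [qd_zero]; simpa using one_lt_phi.le
  | 1 => by
      rw [qd_one, pow_one]
      have : (1:ℝ) ≤ (c 0 : ℝ) := by exact_mod_cast hc 0
      nlinarith [phi_pos]
  | (n+2) => by
      have h1 := qd_ge_phi c hc (n+1)
      have h2 := qd_ge_phi c hc n
      have h3 : (qd c (n+1) : ℝ) + qd c n ≤ qd c (n+2) := by
        rw [qd_rec]
        push_cast
        have h5 : (1:ℝ) ≤ (c (n+1) : ℝ) := by exact_mod_cast hc (n+1)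
        have h6 : (0:ℝ) ≤ (qd c (n+1) : ℝ) := Nat.cast_nonneg _
        nlinarith
      have h4 : Phi ^ (n+2) = Phi ^ (n+1) + Phi ^ n := by
        have : Phi ^ (n+2) = Phi ^ n * Phi ^ 2 := by ring
        rw [this, phi_sq]; ring
      rw [h4]
      calc Phi ^ (n+1) + Phi ^ n ≤ Phi * qd c (n+1) + Phi * qd c n := by linarith
      _ = Phi * ((qd c (n+1) : ℝ) + qd c n) := by ring
      _ ≤ Phi * qd c (n+2) := by nlinarith [phi_pos, h3]

lemma det (c : ℕ → ℕ) : ∀ n : ℕ,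
    (pd c (n+2) : ℤ) * qd c (n+1) - (pd c (n+1) : ℤ) * qd c (n+2) = (-1) ^ (n+1) := by
  intro n
  induction n with
  | zero =>
      rw [pd_two, pd_one, qd_one, qd_rec, qd_one, qd_zero]
      push_cast; ring
  | succ n ih =>
      rw [pd_rec, qd_rec c (n+1)]
      push_cast
      push_cast at ih
      linear_combination (-1 : ℤ) * ih

end S6

namespace S6

noncomputable def cnv (c : ℕ → ℕ) (n : ℕ) : ℝ := (pd c n : ℝ) / (qd c n : ℝ)
noncomputable def cc (c : ℕ → ℕ) (n : ℕ) : ℝ := 1 / ((qd c n : ℝ) * (qd c (n+1) : ℝ))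

variable (c : ℕ → ℕ) (hc : ∀ i, 0 < c i)
include hc

lemma qdR_pos (n : ℕ) : (0:ℝ) < (qd c n : ℝ) := by exact_mod_cast qd_pos c hc n
lemma qdR_one_le (n : ℕ) : (1:ℝ) ≤ (qd c n : ℝ) := by exact_mod_cast qd_pos c hc n

lemma cc_pos (n : ℕ) : 0 < cc c n :=
  div_pos one_pos (mul_pos (qdR_pos c hc n) (qdR_pos c hc (n+1)))

lemma cnv_sub (n : ℕ) : cnv c (n+2) - cnv c (n+1)
    = (-1)^(n+1) / ((qd c (n+1) : ℝ) * (qd c (n+2) : ℝ)) := by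
  have d : (pd c (n+2) : ℝ) * qd c (n+1) - (pd c (n+1) : ℝ) * qd c (n+2) = (-1)^(n+1) := by
    exact_mod_cast det c n
  have h1 : (qd c (n+1) : ℝ) ≠ 0 := ne_of_gt (qdR_pos c hc _)
  have h2 : (qd c (n+2) : ℝ) ≠ 0 := ne_of_gt (qdR_pos c hc _)
  unfold cnv
  field_simp
  linear_combination d

lemma dist_cnv (n : ℕ) : dist (cnv c (n+1)) (cnv c (n+2)) = cc c (n+1) := by
  rw [Real.dist_eq, ← neg_sub, abs_neg, cnv_sub c hc n, cc, abs_div, abs_pow, abs_neg, abs_one,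
    one_pow]
  congr 1
  exact abs_of_pos (mul_pos (qdR_pos c hc _) (qdR_pos c hc _))

lemma cc_half (n : ℕ) : cc c (n+1) ≤ cc c n / 2 := by
  have h2 : (2:ℝ) * qd c n ≤ qd c (n+2) := by exact_mod_cast two_qd_le c hc n
  have key : (2:ℝ) * ((qd c n : ℝ) * qd c (n+1)) ≤ (qd c (n+1) : ℝ) * qd c (n+2) := by
    nlinarith [qdR_pos c hc (n+1), qdR_pos c hc n]
  have : cc c (n+1) ≤ 1 / ((2:ℝ) * ((qd c n : ℝ) * qd c (n+1))) := by
    apply one_div_le_one_div_of_le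
    · exact mul_pos two_pos (mul_pos (qdR_pos c hc n) (qdR_pos c hc (n+1)))
    · exact key
  calc cc c (n+1) ≤ 1 / ((2:ℝ) * ((qd c n : ℝ) * qd c (n+1))) := this
  _ = cc c n / 2 := by rw [cc]; ring

lemma cc_geom (n k : ℕ) : cc c (n+k) ≤ cc c n * (1/2)^k := by
  induction k with
  | zero => simp
  | succ k ih =>
      calc cc c (n+(k+1)) = cc c ((n+k)+1) := by ring_nf
      _ ≤ cc c (n+k) / 2 := cc_half c hc _
      _ ≤ cc c n * (1/2)^k / 2 := by linarith
      _ = cc c n * (1/2)^(k+1) := by ring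

lemma cc_le_one (n : ℕ) (hn : 1 ≤ n) : cc c n ≤ 1 := by
  rw [cc]
  rw [div_le_one (mul_pos (qdR_pos c hc n) (qdR_pos c hc (n+1)))]
  nlinarith [qdR_one_le c hc n, qdR_one_le c hc (n+1)]

lemma dist_cnv_le (n : ℕ) : dist (cnv c n) (cnv c (n+1)) ≤ 2 * (1/2)^n := by
  match n with
  | 0 =>
      have h1 : cnv c 0 = 1 := by unfold cnv; rw [pd_zero, qd_zero]; norm_num
      have h2 : (0:ℝ) < cnv c 1 := by
        unfold cnv; exact div_pos (by rw [pd_one]; norm_num) (qdR_pos c hc 1)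
      have h3 : cnv c 1 ≤ 1 := by
        unfold cnv
        rw [div_le_one (qdR_pos c hc 1), pd_one]
        exact_mod_cast qdR_one_le c hc 1
      rw [Real.dist_eq]
      rw [abs_le]
      constructor <;> simp [h1] <;> linarith
  | (n+1) =>
      rw [dist_cnv c hc n]
      calc cc c (n+1) = cc c (1 + n) := by ring_nf
      _ ≤ cc c 1 * (1/2)^n := cc_geom c hc 1 n
      _ ≤ 1 * (1/2)^n := by
            have := cc_le_one c hc 1 le_rfl
            have := cc_pos c hc 1
            have : (0:ℝ) < (1/2:ℝ)^n := by positivity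
            nlinarith [cc_le_one c hc 1 le_rfl, cc_pos c hc 1]
      _ = 2 * (1/2)^(n+1) := by ring

lemma exists_tendsto : ∃ y, Tendsto (cnv c) atTop (𝓝 y) := by
  apply cauchySeq_tendsto_of_complete
  exact cauchySeq_of_le_geometric (1/2) 2 (by norm_num) (dist_cnv_le c hc)

lemma dist_lim {y : ℝ} (hy : Tendsto (cnv c) atTop (𝓝 y)) (n : ℕ) (hn : 1 ≤ n) :
    |y - cnv c n| ≤ 2 * cc c n := by
  obtain ⟨m, rfl⟩ : ∃ m, n = m + 1 := ⟨n - 1, by omega⟩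
  have hy' : Tendsto (fun k => cnv c ((m+1) + k)) atTop (𝓝 y) := by
    have h := hy.comp (tendsto_add_atTop_nat (m+1))
    convert h using 2 with k
    simp [Function.comp, Nat.add_comm]
  have hd : ∀ k, dist (cnv c ((m+1) + k)) (cnv c ((m+1) + k + 1)) ≤ cc c (m+1) * (1/2)^k := by
    intro k
    have h1 : (m+1) + k = (m + k) + 1 := by omega
    rw [h1, show (m+k)+1+1 = (m+k)+2 from rfl, dist_cnv c hc (m+k),
      show (m+k)+1 = (m+1) + k by omega]
    exact cc_geom c hc (m+1) k
  have := dist_le_of_le_geometric_of_tendsto₀ (1/2) (cc c (m+1)) (by norm_num) hd hy'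
  rw [add_zero] at this
  rw [abs_sub_comm, ← Real.dist_eq]
  calc dist (cnv c (m+1)) y ≤ cc c (m+1) / (1 - 1/2) := this
  _ = 2 * cc c (m+1) := by ring

end S6

namespace S6

variable (c : ℕ → ℕ) (hc : ∀ i, 0 < c i)
include hc

lemma phi_pow_pos (n : ℕ) : (0:ℝ) < Phi ^ n := pow_pos phi_pos n

lemma cc_le_phi (n : ℕ) : cc c n ≤ Phi^2 / Phi^(2*n) := by
  have h1 := qd_ge_phi c hc n
  have h2 := qd_ge_phi c hc (n+1)
  have h3 : Phi ^ n ≤ Phi ^ (n+1) := pow_le_pow_right₀ one_lt_phi.le (by omega)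
  rw [cc, div_le_div_iff₀ (mul_pos (qdR_pos c hc n) (qdR_pos c hc (n+1)))
    (pow_pos phi_pos _)]
  have key : Phi^(2*n) = Phi^n * Phi^n := by rw [two_mul, pow_add]
  rw [key]
  nlinarith [qdR_pos c hc n, qdR_pos c hc (n+1), phi_pos, phi_pow_pos c hc n]

lemma cnv_ne (n : ℕ) : cnv c (n+1) ≠ cnv c (n+2) := by
  intro h
  have hs := cnv_sub c hc n
  rw [← h, sub_self] at hs
  have hpos : (0:ℝ) < (qd c (n+1) : ℝ) * qd c (n+2) :=
    mul_pos (qdR_pos c hc _) (qdR_pos c hc _)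
  have habs : |((-1:ℝ))^(n+1) / ((qd c (n+1):ℝ) * qd c (n+2))| = 0 := by rw [← hs]; simp
  rw [abs_div, abs_pow, abs_neg, abs_one, one_pow, abs_of_pos hpos] at habs
  exact absurd habs (ne_of_gt (div_pos one_pos hpos))

lemma irrational_lim {y : ℝ} (hy : Tendsto (cnv c) atTop (𝓝 y)) : Irrational y := by
  rintro ⟨r, rfl⟩
  have hden : (0:ℝ) < (r.den : ℝ) := by exact_mod_cast r.pos
  have key : ∀ m, 1 ≤ m → (r:ℝ) ≠ cnv c m → (qd c (m+1) : ℝ) ≤ 2 * r.den := by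
    intro m hm hne
    have hq := qdR_pos c hc m
    have hq1 := qdR_pos c hc (m+1)
    set N : ℤ := r.num * qd c m - pd c m * r.den with hNdef
    have hN : N ≠ 0 := by
      intro h0
      apply hne
      have h0' : (r.num : ℝ) * qd c m = (pd c m : ℝ) * r.den := by
        have h0'' : ((N : ℤ) : ℝ) = 0 := by rw [h0]; simp
        rw [hNdef] at h0''
        push_cast at h0''
        linarith
      rw [Rat.cast_def]
      unfold cnv
      rw [div_eq_div_iff hden.ne' hq.ne']
      linarith
    have h1 : (1:ℝ) ≤ |(N:ℝ)| := by exact_mod_cast Int.one_le_abs hN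
    have hdiff : (r:ℝ) - cnv c m = (N:ℝ) / ((r.den:ℝ) * qd c m) := by
      unfold cnv
      rw [Rat.cast_def]
      field_simp
      rw [hNdef]
      push_cast
      ring
    have hlow : 1 / ((r.den:ℝ) * qd c m) ≤ |(r:ℝ) - cnv c m| := by
      rw [hdiff, abs_div, abs_of_pos (mul_pos hden hq)]
      gcongr
    have hupp : |(r:ℝ) - cnv c m| ≤ 2 * cc c m := dist_lim c hc hy m hm
    have : 1 / ((r.den:ℝ) * qd c m) ≤ 2 * (1 / ((qd c m : ℝ) * qd c (m+1))) := by
      calc _ ≤ |(r:ℝ) - cnv c m| := hlow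
      _ ≤ 2 * cc c m := hupp
      _ = 2 * (1 / ((qd c m : ℝ) * qd c (m+1))) := by rw [cc]
    rw [div_le_iff₀ (mul_pos hden hq)] at this
    have h6 : (0:ℝ) < (qd c m : ℝ) * qd c (m+1) := mul_pos hq hq1
    rw [mul_comm (2:ℝ) _, one_div, inv_mul_eq_div, div_mul_eq_mul_div, le_div_iff₀ h6] at this
    nlinarith
  have key2 : ∀ n, 1 ≤ n → (qd c (n+1) : ℝ) ≤ 2 * r.den := by
    intro n hn
    by_cases h : (r:ℝ) = cnv c n
    · obtain ⟨m, rfl⟩ : ∃ m, n = m + 1 := ⟨n - 1, by omega⟩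
      have hne : (r:ℝ) ≠ cnv c (m+2) := by
        rw [h]; exact cnv_ne c hc m
      have := key (m+2) (by omega) hne
      have hmono : (qd c (m+2) : ℝ) ≤ qd c (m+3) := by
        exact_mod_cast qd_mono c hc (m+2)
      linarith
    · exact key n hn h
  obtain ⟨n, hn⟩ := pow_unbounded_of_one_lt (Phi * (2 * r.den + 1)) one_lt_phi
  have h7 : Phi ^ n ≤ Phi ^ (n+2) := pow_le_pow_right₀ one_lt_phi.le (by omega)
  have h8 := qd_ge_phi c hc (n+2)
  have h9 := key2 (n+1) (by omega)
  have : Phi * (2 * r.den + 1) < Phi * qd c (n+2) := by linarith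
  have h10 : (2 * (r.den:ℝ) + 1) < qd c (n+2) := by
    have := (mul_lt_mul_iff_right₀ phi_pos).mp this
    linarith
  have : (qd c (n+2) : ℝ) ≤ 2 * r.den := h9
  linarith

end S6

namespace S6

noncomputable def ff (b : ℕ → ℕ) (k : ℕ) : ℝ := (-1)^k * (2:ℝ)^((1:ℤ) - (cfSum b (k+1) : ℤ))

lemma cfSum_ge (b : ℕ → ℕ) (hb : ∀ i, 0 < b i) (n : ℕ) : n ≤ cfSum b n := by
  unfold cfSum
  calc n = ∑ _i ∈ Finset.range n, 1 := by simp
  _ ≤ ∑ i ∈ Finset.range n, b i := Finset.sum_le_sum (fun i _ => hb i)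

lemma norm_ff_le (b : ℕ → ℕ) (hb : ∀ i, 0 < b i) (k : ℕ) : ‖ff b k‖ ≤ (1/2:ℝ)^k := by
  unfold ff
  rw [norm_mul, norm_pow, norm_neg, norm_one, one_pow, one_mul]
  have h1 : (1:ℤ) - (cfSum b (k+1) : ℤ) ≤ -(k:ℤ) := by
    have := cfSum_ge b hb (k+1)
    omega
  have h2 : ‖(2:ℝ)^((1:ℤ) - (cfSum b (k+1) : ℤ))‖ = (2:ℝ)^((1:ℤ) - (cfSum b (k+1) : ℤ)) := by
    rw [Real.norm_eq_abs, abs_of_pos (zpow_pos two_pos _)]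
  rw [h2]
  calc (2:ℝ)^((1:ℤ) - (cfSum b (k+1) : ℤ)) ≤ (2:ℝ)^(-(k:ℤ)) :=
        zpow_le_zpow_right₀ one_le_two h1
  _ = (1/2:ℝ)^k := by
        rw [zpow_neg, zpow_natCast, one_div, inv_pow]

lemma summable_ff (b : ℕ → ℕ) (hb : ∀ i, 0 < b i) : Summable (ff b) :=
  Summable.of_norm_bounded (summable_geometric_of_lt_one (by norm_num) (by norm_num))
    (norm_ff_le b hb)

lemma tail_formula (b : ℕ → ℕ) (t M : ℕ) (h : ∀ k, cfSum b (k + t + 1) = M + k) :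
    ∑' k, ff b (k + t) = (-1:ℝ)^t * 2^((1:ℤ) - (M:ℤ)) * (2/3) := by
  have hpt : ∀ k : ℕ, ff b (k + t) = ((-1:ℝ)^t * 2^((1:ℤ) - (M:ℤ))) * (-(1/2):ℝ)^k := by
    intro k
    unfold ff
    rw [h k]
    have e1 : ((1:ℤ) - ((M + k : ℕ) : ℤ)) = ((1:ℤ) - (M:ℤ)) + (-(k:ℤ)) := by push_cast; ring
    rw [e1, zpow_add₀ (two_ne_zero), zpow_neg, zpow_natCast, pow_add, neg_pow (1/2:ℝ)]
    rw [one_div, inv_pow]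
    ring
  rw [tsum_congr hpt, tsum_mul_left, tsum_geometric_of_norm_lt_one (by
    rw [norm_neg, Real.norm_eq_abs]; rw [abs_of_pos]; norm_num; norm_num)]
  norm_num

def ubf (a : ℕ → ℕ) (t : ℕ) : ℕ → ℕ := fun i => if i < t then a i else if i = t then 2 else 1
def vbf (a : ℕ → ℕ) (t : ℕ) : ℕ → ℕ := fun i => if i < t then a i else 1

lemma ubf_pos (a : ℕ → ℕ) (t : ℕ) (ha : ∀ i, 0 < a i) : ∀ i, 0 < ubf a t i := by
  intro i; unfold ubf; split
  · exact ha i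
  · split <;> norm_num

lemma vbf_pos (a : ℕ → ℕ) (t : ℕ) (ha : ∀ i, 0 < a i) : ∀ i, 0 < vbf a t i := by
  intro i; unfold vbf; split
  · exact ha i
  · norm_num

lemma cfSum_head (b a : ℕ → ℕ) (t : ℕ) (hagree : ∀ i < t, b i = a i) (k : ℕ) (hk : k ≤ t) :
    cfSum b k = cfSum a k := by
  unfold cfSum
  exact Finset.sum_congr rfl (fun i hi => hagree i (lt_of_lt_of_le (Finset.mem_range.mp hi) hk))

lemma ubf_agree (a : ℕ → ℕ) (t : ℕ) : ∀ i < t, ubf a t i = a i := by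
  intro i hi; unfold ubf; rw [if_pos hi]

lemma vbf_agree (a : ℕ → ℕ) (t : ℕ) : ∀ i < t, vbf a t i = a i := by
  intro i hi; unfold vbf; rw [if_pos hi]

lemma cfSum_ubf (a : ℕ → ℕ) (t : ℕ) : ∀ k, cfSum (ubf a t) (k + t + 1) = (cfSum a t + 2) + k := by
  intro k
  induction k with
  | zero =>
      rw [zero_add, cfSum, Finset.sum_range_succ, ← cfSum]
      rw [cfSum_head (ubf a t) a t (ubf_agree a t) t le_rfl]
      have : ubf a t t = 2 := by unfold ubf; rw [if_neg (lt_irrefl t), if_pos rfl]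
      omega
  | succ k ih =>
      have e : k + 1 + t + 1 = (k + t + 1) + 1 := by omega
      rw [e, cfSum, Finset.sum_range_succ, ← cfSum, ih]
      have : ubf a t (k + t + 1) = 1 := by
        unfold ubf; rw [if_neg (by omega), if_neg (by omega)]
      omega

lemma cfSum_vbf (a : ℕ → ℕ) (t : ℕ) : ∀ k, cfSum (vbf a t) (k + t + 1) = (cfSum a t + 1) + k := by
  intro k
  induction k with
  | zero =>
      rw [zero_add, cfSum, Finset.sum_range_succ, ← cfSum]
      rw [cfSum_head (vbf a t) a t (vbf_agree a t) t le_rfl]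
      have : vbf a t t = 1 := by unfold vbf; rw [if_neg (lt_irrefl t)]
      omega
  | succ k ih =>
      have e : k + 1 + t + 1 = (k + t + 1) + 1 := by omega
      rw [e, cfSum, Finset.sum_range_succ, ← cfSum, ih]
      have : vbf a t (k + t + 1) = 1 := by
        unfold vbf; rw [if_neg (by omega)]
      omega

lemma map_range_eq (b a : ℕ → ℕ) (t : ℕ) (hagree : ∀ i < t, b i = a i) :
    (List.range t).map b = (List.range t).map a := by
  apply List.map_congr_left
  intro i hi
  exact hagree i (List.mem_range.mp hi)

end S6

namespace S6

lemma tsum_diff (a : ℕ → ℕ) (t : ℕ) (ha : ∀ i, 0 < a i) :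
    (∑' k, ff (vbf a t) k) - (∑' k, ff (ubf a t) k)
      = (-1:ℝ)^t * (1/3) * 2^(-(cfSum a t : ℤ)) := by
  have su := summable_ff (ubf a t) (ubf_pos a t ha)
  have sv := summable_ff (vbf a t) (vbf_pos a t ha)
  rw [← Summable.sum_add_tsum_nat_add t su, ← Summable.sum_add_tsum_nat_add t sv]
  have hheads : ∑ i ∈ Finset.range t, ff (vbf a t) i = ∑ i ∈ Finset.range t, ff (ubf a t) i := by
    apply Finset.sum_congr rfl
    intro i hi
    have hi' := Finset.mem_range.mp hi
    unfold ff
    rw [cfSum_head (vbf a t) a t (vbf_agree a t) (i+1) (by omega),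
        ← cfSum_head (ubf a t) a t (ubf_agree a t) (i+1) (by omega)]
  rw [hheads]
  rw [tail_formula (ubf a t) t (cfSum a t + 2) (cfSum_ubf a t),
      tail_formula (vbf a t) t (cfSum a t + 1) (cfSum_vbf a t)]
  have e1 : ((1:ℤ) - ((cfSum a t + 1 : ℕ) : ℤ)) = -(cfSum a t : ℤ) := by push_cast; ring
  have e2 : ((1:ℤ) - ((cfSum a t + 2 : ℕ) : ℤ)) = -(cfSum a t : ℤ) + (-1) := by push_cast; ring
  rw [e1, e2, zpow_add₀ (two_ne_zero), zpow_neg_one]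
  norm_num
  ring

end S6


set_option maxHeartbeats 1000000 in
/-- If `?'(x)` exists and equals `0`, then `S_x(t) - κ₁ t > 0` for all `t` large enough. -/
theorem stmt6 (x : ℝ) (hx : x ∈ Set.Ioo (0:ℝ) 1) (hirr : Irrational x)
    (a : ℕ → ℕ) (ha : IsCFOf x a)
    (Q : ℝ → ℝ) (hQ : IsMinkowski Q) (hder : HasDerivAt Q 0 x) :
    ∃ T : ℕ, ∀ t : ℕ, T < t → (cfSum a t : ℝ) - kappa1 * t > 0 := by
  obtain ⟨hQc, hQm, hQ0, hQ1, hQser⟩ := hQ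
  obtain ⟨hapos, haconv⟩ := ha
  have haconv' : Filter.Tendsto (S6.cnv a) Filter.atTop (nhds x) := haconv
  have ho : (fun y => Q y - Q x) =o[nhds x] fun y => y - x := by
    have h := hasDerivAt_iff_isLittleO.mp hder
    simpa using h
  have heps := (Asymptotics.isLittleO_iff.mp ho) (show (0:ℝ) < 1/100 by norm_num)
  rw [Metric.eventually_nhds_iff] at heps
  obtain ⟨δ, hδ, hball⟩ := heps
  set B : ℕ → ℝ := fun t => 4 * Phi^2 / Phi^(2*t) with hB
  have hphi1 := S6.one_lt_phi
  have hphip := S6.phi_pos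
  have hBto : Filter.Tendsto B Filter.atTop (nhds 0) := by
    have h2 : Filter.Tendsto (fun t:ℕ => (Phi^2)^t) Filter.atTop Filter.atTop :=
      tendsto_pow_atTop_atTop_of_one_lt (by nlinarith)
    have h3 := Filter.Tendsto.div_atTop (tendsto_const_nhds (x := 4*Phi^2)) h2
    convert h3 using 2 with t
    show 4 * Phi ^ 2 / Phi ^ (2*t) = 4 * Phi ^ 2 / (Phi ^ 2) ^ t
    rw [pow_mul]
  have hev : ∀ᶠ t in Filter.atTop, B t < δ ∧ B t < x ∧ B t < 1 - x := by
    filter_upwards [hBto.eventually (gt_mem_nhds hδ), hBto.eventually (gt_mem_nhds hx.1),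
      hBto.eventually (gt_mem_nhds (show (0:ℝ) < 1 - x by linarith [hx.2]))] with t h1 h2 h3
    exact ⟨h1, h2, h3⟩
  obtain ⟨T, hT⟩ := Filter.eventually_atTop.mp hev
  refine ⟨T, ?_⟩
  intro t ht
  obtain ⟨hBδ, hBx, hBx'⟩ := hT t (le_of_lt ht)
  have ht1 : 1 ≤ t := by omega
  set ub := S6.ubf a t with hub
  set vb := S6.vbf a t with hvb
  have hub_pos := S6.ubf_pos a t hapos
  have hvb_pos := S6.vbf_pos a t hapos
  obtain ⟨u, hu_t⟩ := S6.exists_tendsto ub hub_pos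
  obtain ⟨v, hv_t⟩ := S6.exists_tendsto vb hvb_pos
  have hxconv : |x - S6.cnv a t| ≤ 2 * S6.cc a t := S6.dist_lim a hapos haconv' t ht1
  have hcnveq_u : S6.cnv ub t = S6.cnv a t := by
    unfold S6.cnv S6.pd S6.qd
    rw [S6.map_range_eq ub a t (S6.ubf_agree a t)]
  have hcnveq_v : S6.cnv vb t = S6.cnv a t := by
    unfold S6.cnv S6.pd S6.qd
    rw [S6.map_range_eq vb a t (S6.vbf_agree a t)]
  have hphiB : 2 * (Phi^2/Phi^(2*t)) + 2 * (Phi^2/Phi^(2*t)) = B t := by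
    rw [hB]; ring
  have hud : |u - x| ≤ B t := by
    have h1 : |u - S6.cnv ub t| ≤ 2 * S6.cc ub t := S6.dist_lim ub hub_pos hu_t t ht1
    have h2 := S6.cc_le_phi ub hub_pos t
    have h3 := S6.cc_le_phi a hapos t
    have h4 : |u - x| ≤ |u - S6.cnv ub t| + |x - S6.cnv a t| := by
      rw [hcnveq_u]
      calc |u - x| = |(u - S6.cnv a t) + (S6.cnv a t - x)| := by ring_nf
      _ ≤ |u - S6.cnv a t| + |S6.cnv a t - x| := abs_add_le _ _
      _ = |u - S6.cnv a t| + |x - S6.cnv a t| := by rw [abs_sub_comm (S6.cnv a t) x]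
    rw [← hphiB]
    linarith
  have hvd : |v - x| ≤ B t := by
    have h1 : |v - S6.cnv vb t| ≤ 2 * S6.cc vb t := S6.dist_lim vb hvb_pos hv_t t ht1
    have h2 := S6.cc_le_phi vb hvb_pos t
    have h3 := S6.cc_le_phi a hapos t
    have h4 : |v - x| ≤ |v - S6.cnv vb t| + |x - S6.cnv a t| := by
      rw [hcnveq_v]
      calc |v - x| = |(v - S6.cnv a t) + (S6.cnv a t - x)| := by ring_nf
      _ ≤ |v - S6.cnv a t| + |S6.cnv a t - x| := abs_add_le _ _
      _ = |v - S6.cnv a t| + |x - S6.cnv a t| := by rw [abs_sub_comm (S6.cnv a t) x]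
    rw [← hphiB]
    linarith
  have hu_mem : u ∈ Set.Ioo (0:ℝ) 1 := by
    have h := abs_le.mp hud
    constructor
    · linarith [h.1]
    · linarith [h.2]
  have hv_mem : v ∈ Set.Ioo (0:ℝ) 1 := by
    have h := abs_le.mp hvd
    constructor
    · linarith [h.1]
    · linarith [h.2]
  have hu_irr : Irrational u := S6.irrational_lim ub hub_pos hu_t
  have hv_irr : Irrational v := S6.irrational_lim vb hvb_pos hv_t
  have hQu : Q u = ∑' k, S6.ff ub k := hQser u hu_mem hu_irr ub ⟨hub_pos, hu_t⟩
  have hQv : Q v = ∑' k, S6.ff vb k := hQser v hv_mem hv_irr vb ⟨hvb_pos, hv_t⟩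
  have hdiffQ : Q v - Q u = (-1:ℝ)^t * (1/3) * 2^(-(cfSum a t : ℤ)) := by
    rw [hQu, hQv]
    exact S6.tsum_diff a t hapos
  have hzpos : (0:ℝ) < (2:ℝ)^(-(cfSum a t : ℤ)) := zpow_pos two_pos _
  have habs : (1/3) * (2:ℝ)^(-(cfSum a t : ℤ)) = |Q v - Q u| := by
    rw [hdiffQ, abs_mul, abs_mul, abs_pow, abs_neg, abs_one, one_pow, one_mul,
      abs_of_pos hzpos, abs_of_pos (show (0:ℝ) < 1/3 by norm_num)]
  have hQv_x : |Q v - Q x| ≤ 1/100 * |v - x| := by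
    have := hball (show dist v x < δ by rw [Real.dist_eq]; exact lt_of_le_of_lt hvd hBδ)
    simpa [Real.norm_eq_abs] using this
  have hQu_x : |Q u - Q x| ≤ 1/100 * |u - x| := by
    have := hball (show dist u x < δ by rw [Real.dist_eq]; exact lt_of_le_of_lt hud hBδ)
    simpa [Real.norm_eq_abs] using this
  have hchain : (1/3) * (2:ℝ)^(-(cfSum a t : ℤ)) ≤ 1/100 * (B t + B t) := by
    rw [habs]
    calc |Q v - Q u| = |(Q v - Q x) - (Q u - Q x)| := by ring_nf
    _ ≤ |Q v - Q x| + |Q u - Q x| := abs_sub _ _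
    _ ≤ 1/100 * |v - x| + 1/100 * |u - x| := by linarith
    _ ≤ 1/100 * (B t + B t) := by linarith [hvd, hud]
  have hphi2 : Phi^2 ≤ 4 := by nlinarith [S6.phi_le_two]
  have hPpos : (0:ℝ) < Phi^(2*t) := pow_pos hphip _
  have hPinv : (0:ℝ) < (Phi^(2*t))⁻¹ := inv_pos.mpr hPpos
  have hfin : (2:ℝ)^(-(cfSum a t : ℤ)) < (Phi^(2*t))⁻¹ := by
    have hBval : B t = 4*Phi^2 * (Phi^(2*t))⁻¹ := div_eq_mul_inv _ _
    rw [hBval] at hchain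
    nlinarith
  have hzz : (2:ℝ)^(-(cfSum a t : ℤ)) = ((2:ℝ)^(cfSum a t : ℕ))⁻¹ := by
    rw [zpow_neg, zpow_natCast]
  have h2p : (0:ℝ) < (2:ℝ)^(cfSum a t : ℕ) := pow_pos two_pos _
  have hfin2 : Phi^(2*t) < (2:ℝ)^(cfSum a t : ℕ) := by
    rw [hzz] at hfin
    rwa [inv_lt_inv₀ h2p hPpos] at hfin
  have hlog : (2*t : ℝ) * Real.log Phi < (cfSum a t : ℝ) * Real.log 2 := by
    have h := Real.log_lt_log hPpos hfin2
    rw [Real.log_pow, Real.log_pow] at h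
    push_cast at h
    exact h
  have hlog2 : (0:ℝ) < Real.log 2 := Real.log_pos one_lt_two
  have hgoal : kappa1 * t < (cfSum a t : ℝ) := by
    rw [kappa1, div_mul_eq_mul_div, div_lt_iff₀ hlog2]
    nlinarith
  linarith
end

section
/- Let α, β, s be real numbers with β > α ≥ 3 and s ≥ β. Then for every finite sequence (r_1,…,r_k) of real numbers with α ≤ r_i ≤ β for all i and r_1 + ⋯ + r_k = s, one has r_1·r_2·⋯·r_k ≥ β^{⌊s/β⌋}. -/
open Real

lemma aux_pointwise (x β : ℝ) (h3 : 3 ≤ x) (hxβ : x ≤ β) :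
    β ^ (x / β : ℝ) ≤ x := by
  have hb3 : (3:ℝ) ≤ β := le_trans h3 hxβ
  have hbpos : (0:ℝ) < β := by linarith
  have hxpos : (0:ℝ) < x := by linarith
  have he : Real.exp 1 ≤ 3 := by
    have := Real.exp_one_lt_d9; linarith
  have hanti : Real.log β / β ≤ Real.log x / x :=
    Real.log_div_self_antitoneOn (by simpa using le_trans he h3)
      (by simpa using le_trans he hb3) hxβ
  -- hanti : log β / β ≤ log x / x
  have hkey : x / β * Real.log β ≤ Real.log x := by
    calc x / β * Real.log β = x * (Real.log β / β) := by ring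
      _ ≤ x * (Real.log x / x) := mul_le_mul_of_nonneg_left hanti hxpos.le
      _ = Real.log x := by field_simp
  calc β ^ (x / β : ℝ) = Real.exp (Real.log β * (x / β)) := by
        rw [Real.rpow_def_of_pos hbpos]
    _ ≤ Real.exp (Real.log x) := by
        apply Real.exp_le_exp.mpr; rw [mul_comm]; exact hkey
    _ = x := Real.exp_log hxpos

lemma aux_list (β : ℝ) (hb : 3 ≤ β) (r : List ℝ)
    (h : ∀ y ∈ r, 3 ≤ y ∧ y ≤ β) :
    β ^ (r.sum / β : ℝ) ≤ r.prod := by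
  have hbpos : (0:ℝ) < β := by linarith
  induction r with
  | nil => simp
  | cons x t ih =>
    have hx := h x (by simp)
    have ht : ∀ y ∈ t, 3 ≤ y ∧ y ≤ β := fun y hy => h y (by simp [hy])
    have ih' := ih ht
    have hxp := aux_pointwise x β hx.1 hx.2
    have hsplit : ((x :: t).sum / β : ℝ) = x / β + t.sum / β := by
      simp [List.sum_cons, add_div]
    rw [hsplit, Real.rpow_add hbpos, List.prod_cons]
    exact mul_le_mul hxp ih' (Real.rpow_nonneg (le_of_lt hbpos) _) (by linarith [hx.1])

/-- If `β > α ≥ 3`, `s ≥ β`, and `r_1,…,r_k ∈ [α,β]` with `r_1 + ⋯ + r_k = s`, then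
`r_1 ⋯ r_k ≥ β^⌊s/β⌋`. -/
theorem stmt7 (α β s : ℝ) (hβα : β > α) (hα : α ≥ 3) (hs : s ≥ β)
    (r : List ℝ) (hr : ∀ y ∈ r, α ≤ y ∧ y ≤ β) (hsum : r.sum = s) :
    r.prod ≥ β ^ ⌊s / β⌋ := by
  have hb3 : (3:ℝ) ≤ β := by linarith
  have hbpos : (0:ℝ) < β := by linarith
  have h1 : β ^ (⌊s / β⌋ : ℝ) ≤ β ^ (s / β : ℝ) :=
    Real.rpow_le_rpow_of_exponent_le (by linarith) (Int.floor_le _)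
  have h2 : β ^ (r.sum / β : ℝ) ≤ r.prod :=
    aux_list β hb3 r (fun y hy => ⟨by linarith [(hr y hy).1], (hr y hy).2⟩)
  have h3 : (β : ℝ) ^ (⌊s / β⌋ : ℝ) = β ^ ⌊s / β⌋ := Real.rpow_intCast β _
  rw [hsum] at h2
  calc r.prod ≥ β ^ (s / β : ℝ) := h2
    _ ≥ β ^ (⌊s / β⌋ : ℝ) := h1
    _ = β ^ ⌊s / β⌋ := h3
end

section
/- Let A and C be (possibly empty) finite sequences of positive integers, let B be a finite sequence of positive integers that is symmetric (equal to its reverse), and let p ≥ m ≥ 1 be integers. Then ⟨A, 1, B, p+m−1, C⟩ ≤ ⟨A, m, B, p, C⟩, where commas denote concatenation of sequences and single elements. -/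
open Matrix

def Mq (a : ℕ) : Matrix (Fin 2) (Fin 2) ℕ := !![a,1;1,0]
def Pl (l : List ℕ) : Matrix (Fin 2) (Fin 2) ℕ := (l.map Mq).prod

lemma Pl_nil : Pl [] = 1 := rfl
lemma Pl_cons (a : ℕ) (l : List ℕ) : Pl (a::l) = Mq a * Pl l := by simp [Pl]
lemma Pl_append (X Y : List ℕ) : Pl (X++Y) = Pl X * Pl Y := by simp [Pl]

lemma contAux_eq (l : List ℕ) : contAux l = Pl l 0 0 := by
  induction l using contAux.induct with
  | case1 => rfl
  | case2 a => simp [contAux, Pl, Mq]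
  | case3 a b l ih1 ih2 =>
    rw [contAux, ih1, ih2, Pl_cons, Pl_cons, Pl_cons]
    simp [Matrix.mul_apply, Fin.sum_univ_two, Mq, Matrix.vecMul, dotProduct]

lemma Mq_transpose (a : ℕ) : (Mq a)ᵀ = Mq a := by
  ext i j; fin_cases i <;> fin_cases j <;> simp [Mq]

lemma Pl_reverse (l : List ℕ) : Pl l.reverse = (Pl l)ᵀ := by
  induction l with
  | nil => simp [Pl]
  | cons a l ih =>
    have h : Pl (a::l) = Mq a * Pl l := Pl_cons a l
    rw [List.reverse_cons, Pl_append, ih, h, Matrix.transpose_mul, Mq_transpose]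
    simp [Pl]

lemma cont_eq (l : List ℕ) : cont l = Pl l 0 0 := by
  rw [cont, contAux_eq, Pl_reverse, Matrix.transpose_apply]

lemma Pl_entries (A : List ℕ) (hA : ∀ b ∈ A, 0 < b) :
    Pl A 0 1 ≤ Pl A 0 0 ∧ Pl A 0 1 + Pl A 1 1 ≤ Pl A 0 0 + Pl A 1 0 := by
  induction A with
  | nil => simp [Pl]
  | cons a l ih =>
    have ha : 1 ≤ a := hA a (by simp)
    obtain ⟨h1, h2⟩ := ih (fun b hb => hA b (by simp [hb]))
    rw [Pl_cons]
    simp [Matrix.mul_apply, Fin.sum_univ_two, Mq]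
    constructor
    · nlinarith
    · nlinarith

lemma Pl_mid (A B C : List ℕ) (x y : ℕ) :
    Pl (A ++ x :: (B ++ y :: C)) = Pl A * (Mq x * (Pl B * (Mq y * Pl C))) := by
  rw [Pl_append, Pl_cons, Pl_append, Pl_cons]

lemma key_s8 (a a1 b b1 b2 c c1 k p : ℕ) (ha : a1 ≤ a) (hp : k + 1 ≤ p) :
    a*(1*(b*((p+k)*c+c1) + b1*c) + (b1*((p+k)*c+c1) + b2*c)) + a1*(b*((p+k)*c+c1) + b1*c)
    ≤ a*((k+1)*(b*(p*c+c1) + b1*c) + (b1*(p*c+c1) + b2*c)) + a1*(b*(p*c+c1) + b1*c) := by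
  obtain ⟨q, rfl⟩ : ∃ q, p = k + 1 + q := ⟨p - (k + 1), by omega⟩
  have hkey : a1 * k ≤ a * (k * (k + q)) := by
    cases k with
    | zero => simp
    | succ n =>
      calc a1 * (n+1) ≤ a * (n+1) := mul_le_mul_left ha _
        _ ≤ a * (n+1) * (n+1+q) := Nat.le_mul_of_pos_right _ (by omega)
        _ = a * ((n+1) * (n+1+q)) := by ring
  have h3 : a1*b*c*k ≤ a*b*c*(k*(k+q)) := by
    calc a1*b*c*k = (a1*k)*(b*c) := by ring
      _ ≤ (a*(k*(k+q)))*(b*c) := mul_le_mul_left hkey _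
      _ = a*b*c*(k*(k+q)) := by ring
  ring_nf at h3 ⊢
  nlinarith [h3, Nat.zero_le (b * k * a * c1)]

lemma entry00 (X B C : Matrix (Fin 2) (Fin 2) ℕ) (x y : ℕ) :
    (X * (Mq x * (B * (Mq y * C)))) 0 0 =
      X 0 0 * (x * (B 0 0 * (y * C 0 0 + C 1 0) + B 0 1 * C 0 0)
        + (B 1 0 * (y * C 0 0 + C 1 0) + B 1 1 * C 0 0))
      + X 0 1 * (B 0 0 * (y * C 0 0 + C 1 0) + B 0 1 * C 0 0) := by
  simp [Matrix.mul_apply, Fin.sum_univ_two, Mq, Matrix.vecMul, dotProduct]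

/-- If `B` is a symmetric sequence and `p ≥ m ≥ 1`, then
`⟨A, 1, B, p+m-1, C⟩ ≤ ⟨A, m, B, p, C⟩`. -/
theorem stmt8 (A B C : List ℕ)
    (hA : ∀ b ∈ A, 0 < b) (hB : ∀ b ∈ B, 0 < b) (hC : ∀ b ∈ C, 0 < b)
    (hsym : B.reverse = B) (p m : ℕ) (hm : 1 ≤ m) (hpm : m ≤ p) :
    cont (A ++ 1 :: (B ++ (p + m - 1) :: C)) ≤ cont (A ++ m :: (B ++ p :: C)) := by
  obtain ⟨k, rfl⟩ : ∃ k, m = k + 1 := ⟨m - 1, by omega⟩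
  have hpk : p + (k + 1) - 1 = p + k := by omega
  rw [hpk, cont_eq, cont_eq, Pl_mid, Pl_mid]
  have hsymB : Pl B 0 1 = Pl B 1 0 := by
    conv_lhs => rw [← hsym, Pl_reverse]
    rfl
  obtain ⟨ha1, -⟩ := Pl_entries A hA
  have hk := key_s8 (Pl A 0 0) (Pl A 0 1) (Pl B 0 0) (Pl B 1 0) (Pl B 1 1) (Pl C 0 0)
    (Pl C 1 0) k p ha1 (by omega)
  rw [entry00, entry00, hsymB]
  exact hk
end

section
/- Let x = [0;a_1,a_2,…] ∈ (0,1) be irrational such that the derivative ?'(x) of the Minkowski question-mark function exists at x and equals 0, and suppose every partial quotient a_i is either equal to 1 or greater than 11. Then there exists T ∈ ℕ such that for all t > T one has S_x(t) − κ₁·t > 3·w(A_t), where w(A_t) is the number of indices i ≤ t with a_i > 1. -/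
open Filter Topology

namespace CF

/-- denominator continuant -/
def Kd (b : ℕ → ℕ) (t : ℕ) : ℕ := cont ((List.range t).map b)
/-- numerator continuant -/
def Kn (b : ℕ → ℕ) (t : ℕ) : ℕ := cont (((List.range t).map b).tail)

lemma range_map_succ (b : ℕ → ℕ) (t : ℕ) :
    (List.range (t+1)).map b = (List.range t).map b ++ [b t] := by
  rw [List.range_succ, List.map_append, List.map_singleton]

lemma Kd_zero (b : ℕ → ℕ) : Kd b 0 = 1 := rfl

lemma Kd_one (b : ℕ → ℕ) : Kd b 1 = b 0 := rfl

lemma Kd_rec (b : ℕ → ℕ) (t : ℕ) :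
    Kd b (t+2) = b (t+1) * Kd b (t+1) + Kd b t := by
  unfold Kd cont
  rw [range_map_succ b (t+1), range_map_succ b t, List.reverse_append, List.reverse_append]
  simp only [List.reverse_cons, List.reverse_nil, List.nil_append, List.cons_append,
    List.singleton_append]
  rfl

lemma Kn_shift (b : ℕ → ℕ) (t : ℕ) : Kn b (t+1) = Kd (fun i => b (i+1)) t := by
  unfold Kn Kd
  rw [List.range_succ_eq_map, List.map_cons, List.map_map, List.tail_cons]
  rfl

lemma Kn_zero (b : ℕ → ℕ) : Kn b 0 = 1 := rfl
lemma Kn_one (b : ℕ → ℕ) : Kn b 1 = 1 := rfl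

lemma Kn_rec (b : ℕ → ℕ) (t : ℕ) :
    Kn b (t+3) = b (t+2) * Kn b (t+2) + Kn b (t+1) := by
  rw [Kn_shift, Kn_shift, Kn_shift, Kd_rec]

section pos
variable {b : ℕ → ℕ} (hb : ∀ i, 0 < b i)
include hb

lemma Kd_pos : ∀ t, 0 < Kd b t
  | 0 => by simp [Kd_zero]
  | 1 => by simpa [Kd_one] using hb 0
  | (t+2) => by
      have h1 := Kd_pos t
      rw [Kd_rec]
      omega

lemma Kd_mono : ∀ t, Kd b t ≤ Kd b (t+1)
  | 0 => by simpa [Kd_zero, Kd_one] using Nat.succ_le_of_lt (hb 0)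
  | (t+1) => by
      rw [Kd_rec]
      calc Kd b (t+1) ≤ b (t+1) * Kd b (t+1) :=
            Nat.le_mul_of_pos_left _ (hb (t+1))
        _ ≤ _ := Nat.le_add_right _ _

lemma Kd_mono' {s t : ℕ} (h : s ≤ t) : Kd b s ≤ Kd b t := by
  induction t with
  | zero => simpa [Nat.le_zero.mp h]
  | succ t ih =>
    rcases Nat.lt_or_ge s (t+1) with h' | h'
    · exact le_trans (ih (Nat.lt_succ_iff.mp h')) (Kd_mono hb t)
    · have : s = t+1 := le_antisymm h h'
      simp [this]

lemma Kd_fib (t : ℕ) : Kd b (t+1) + Kd b t ≤ Kd b (t+2) := by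
  rw [Kd_rec]
  have := Nat.le_mul_of_pos_left (Kd b (t+1)) (hb (t+1))
  omega

lemma Kd_strict (t : ℕ) : Kd b (t+1) < Kd b (t+2) := by
  have := Kd_fib hb t
  have := Kd_pos hb t
  omega

lemma Kd_lb (t : ℕ) : t + 1 ≤ Kd b (t+1) := by
  induction t with
  | zero => simpa [Kd_one] using Nat.succ_le_of_lt (hb 0)
  | succ t ih =>
      have h2 : Kd b (t+1) < Kd b (t+1+1) := Kd_strict hb t
      omega

lemma Kd_prod_double (t : ℕ) :
    2 * (Kd b t * Kd b (t+1)) ≤ Kd b (t+1) * Kd b (t+2) := by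
  have h1 : 2 * Kd b t ≤ Kd b (t+2) := by
    have := Kd_fib hb t
    have := Kd_mono hb t
    omega
  calc 2 * (Kd b t * Kd b (t+1)) = (2 * Kd b t) * Kd b (t+1) := by ring
    _ ≤ Kd b (t+2) * Kd b (t+1) := Nat.mul_le_mul_right _ h1
    _ = _ := Nat.mul_comm _ _

lemma Kd_prod_pow {s t : ℕ} (h : s ≤ t) :
    2^(t-s) * (Kd b s * Kd b (s+1)) ≤ Kd b t * Kd b (t+1) := by
  induction t with
  | zero => simp_all
  | succ t ih =>
    rcases Nat.lt_or_ge s (t+1) with h' | h'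
    · have hs := Nat.lt_succ_iff.mp h'
      have h2 := Kd_prod_double hb (t+1)
      have h3 := ih hs
      have : t + 1 - s = (t - s) + 1 := by omega
      rw [this, pow_succ]
      calc 2^(t-s) * 2 * (Kd b s * Kd b (s+1))
          = 2 * (2^(t-s) * (Kd b s * Kd b (s+1))) := by ring
        _ ≤ 2 * (Kd b t * Kd b (t+1)) := by omega
        _ ≤ _ := by
            have := Kd_prod_double hb t
            have h4 : Kd b (t+1) * Kd b (t+2) ≤ Kd b (t+1) * Kd b (t+1+1) := le_refl _
            omega
    · have : s = t+1 := le_antisymm h h'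
      simp [this]

lemma Kn_pos : ∀ t, 0 < Kn b t
  | 0 => by simp [Kn_zero]
  | (t+1) => by
      rw [Kn_shift]
      exact Kd_pos (fun i => hb (i+1)) t

lemma Kn_le_Kd : ∀ t, 1 ≤ t → Kn b t ≤ Kd b t
  | 1, _ => by simpa [Kn_one, Kd_one] using Nat.succ_le_of_lt (hb 0)
  | 2, _ => by
      have : Kn b 2 = b 1 := by rw [Kn_shift]; rfl
      rw [this, Kd_rec, Kd_one, Kd_zero]
      nlinarith [hb 0, hb 1]
  | (t+3), _ => by
      have h1 := Kn_le_Kd (t+1) (by omega)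
      have h2 := Kn_le_Kd (t+2) (by omega)
      have e2 : Kd b (t+3) = b (t+2) * Kd b (t+2) + Kd b (t+1) := Kd_rec b (t+1)
      rw [Kn_rec, e2]
      have := Nat.mul_le_mul_left (b (t+2)) h2
      omega

/-- determinant identity -/
lemma det : ∀ t, 1 ≤ t →
    (Kn b (t+1) : ℤ) * Kd b t - Kn b t * Kd b (t+1) = (-1)^t
  | 1, _ => by
      have h2 : Kn b 2 = b 1 := by rw [Kn_shift]; rfl
      rw [h2, Kn_one, Kd_one, Kd_rec, Kd_one, Kd_zero]
      push_cast
      ring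
  | (t+2), _ => by
      have ih := det (t+1) (by omega)
      have e1 : Kn b (t+3) = b (t+2) * Kn b (t+2) + Kn b (t+1) := Kn_rec b t
      have e2 : Kd b (t+3) = b (t+2) * Kd b (t+2) + Kd b (t+1) := Kd_rec b (t+1)
      rw [show t+2+1 = t+3 from rfl, e1, e2]
      push_cast
      linear_combination (-1 : ℤ) * ih

end pos

end CF
namespace CF

noncomputable def cv (b : ℕ → ℕ) (t : ℕ) : ℝ := (Kn b t : ℝ) / (Kd b t : ℝ)

section pos2
variable {b : ℕ → ℕ} (hb : ∀ i, 0 < b i)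
include hb

lemma KdR_pos (t : ℕ) : (0:ℝ) < (Kd b t : ℝ) := by
  exact_mod_cast Kd_pos hb t

lemma cv_mem {t : ℕ} (ht : 1 ≤ t) : cv b t ∈ Set.Icc (0:ℝ) 1 := by
  constructor
  · unfold cv; positivity
  · unfold cv
    rw [div_le_one (KdR_pos hb t)]
    exact_mod_cast Kn_le_Kd hb t ht

lemma cv_diff {t : ℕ} (ht : 1 ≤ t) :
    cv b (t+1) - cv b t = (-1)^t / ((Kd b t : ℝ) * (Kd b (t+1) : ℝ)) := by
  have hd := det hb t ht
  have h1 := (KdR_pos hb t).ne'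
  have h2 := (KdR_pos hb (t+1)).ne'
  have hnum : ((Kn b (t+1) : ℝ)) * (Kd b t) - (Kd b (t+1)) * (Kn b t) = (-1)^t := by
    have h3 : ((Kn b (t+1) : ℝ)) * (Kd b t) - (Kn b t) * (Kd b (t+1)) = (-1)^t := by
      exact_mod_cast congrArg (fun z : ℤ => (z : ℝ)) hd
    linarith
  unfold cv
  rw [div_sub_div _ _ h2 h1, hnum, mul_comm ((Kd b (t+1) : ℝ)) ((Kd b t : ℝ))]

lemma cv_dist {t : ℕ} (ht : 1 ≤ t) :
    |cv b (t+1) - cv b t| = 1 / ((Kd b t : ℝ) * (Kd b (t+1) : ℝ)) := by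
  rw [cv_diff hb ht, abs_div, abs_pow, abs_neg, abs_one, one_pow]
  rw [abs_of_pos (mul_pos (KdR_pos hb t) (KdR_pos hb (t+1)))]

lemma Kd_prod_ge {t : ℕ} (ht : 1 ≤ t) : (2:ℝ)^t ≤ (Kd b t : ℝ) * (Kd b (t+1)) := by
  have h := Kd_prod_pow hb ht
  have h2 : 2 ≤ Kd b 1 * Kd b (1+1) := by
    have e : Kd b 2 = b 1 * b 0 + 1 := by rw [Kd_rec, Kd_one, Kd_zero]
    show 2 ≤ Kd b 1 * Kd b 2
    rw [Kd_one, e]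
    nlinarith [hb 0, hb 1]
  have h4 : 2^t ≤ Kd b t * Kd b (t+1) :=
    calc 2^t = 2^(t-1) * 2 := by rw [← pow_succ]; congr 1; omega
      _ ≤ 2^(t-1) * (Kd b 1 * Kd b (1+1)) := Nat.mul_le_mul_left _ h2
      _ ≤ Kd b t * Kd b (t+1) := h
  exact_mod_cast h4

lemma cv_cauchy : CauchySeq (cv b) := by
  apply cauchySeq_of_le_geometric (1/2 : ℝ) 2 (by norm_num)
  intro n
  rw [Real.dist_eq]
  rcases Nat.eq_zero_or_pos n with hn | hn
  · subst hn
    have h0 : cv b 0 = 1 := by unfold cv; rw [Kn_zero, Kd_zero]; norm_num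
    have h1 := cv_mem hb (le_refl 1)
    rw [abs_of_nonneg (by rw [h0]; linarith [h1.2])]
    rw [h0]
    norm_num
    linarith [h1.1]
  · rw [abs_sub_comm, cv_dist hb hn]
    have h := Kd_prod_ge hb hn
    have h5 : (1:ℝ) / ((Kd b n : ℝ) * Kd b (n+1)) ≤ 1 / (2:ℝ)^n :=
      one_div_le_one_div_of_le (by positivity) h
    have h6 : (1:ℝ) / (2:ℝ)^n = (1/2:ℝ)^n := by rw [div_pow, one_pow]
    have h7 : (1/2:ℝ)^n ≤ 2 * (1/2)^n := by
      nlinarith [pow_pos (show (0:ℝ) < 1/2 by norm_num) n]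
    linarith

noncomputable def cfVal (b : ℕ → ℕ) : ℝ := limUnder atTop (cv b)

lemma cv_tendsto : Tendsto (cv b) atTop (𝓝 (cfVal b)) :=
  (cv_cauchy hb).tendsto_limUnder

lemma cfVal_mem : cfVal b ∈ Set.Icc (0:ℝ) 1 := by
  constructor
  · apply ge_of_tendsto (cv_tendsto hb)
    filter_upwards [eventually_ge_atTop 1] with t ht using (cv_mem hb ht).1
  · apply le_of_tendsto (cv_tendsto hb)
    filter_upwards [eventually_ge_atTop 1] with t ht using (cv_mem hb ht).2

lemma cv_partial_bound {s u : ℕ} (hs : 1 ≤ s) (hu : s ≤ u) :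
    |cv b u - cv b s| ≤ 2 / ((Kd b s : ℝ) * Kd b (s+1)) := by
  have hQ : (0:ℝ) < (Kd b s : ℝ) * Kd b (s+1) :=
    mul_pos (KdR_pos hb s) (KdR_pos hb (s+1))
  have key : ∀ k, s ≤ k → dist (cv b k) (cv b (k+1)) ≤
      (1/2)^(k-s) * (1 / ((Kd b s : ℝ) * Kd b (s+1))) := by
    intro k hk
    rw [Real.dist_eq, abs_sub_comm, cv_dist hb (le_trans hs hk)]
    have hp : (2:ℝ)^(k-s) * ((Kd b s : ℝ) * Kd b (s+1)) ≤ (Kd b k : ℝ) * Kd b (k+1) := by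
      exact_mod_cast Kd_prod_pow hb hk
    have h5 : (1:ℝ)/((Kd b k : ℝ) * Kd b (k+1)) ≤ 1/((2:ℝ)^(k-s) * ((Kd b s:ℝ) * Kd b (s+1))) :=
      one_div_le_one_div_of_le (by positivity) hp
    have h6 : (1/2:ℝ)^(k-s) * (1 / ((Kd b s : ℝ) * Kd b (s+1)))
        = 1/((2:ℝ)^(k-s) * ((Kd b s:ℝ) * Kd b (s+1))) := by
      rw [div_pow, one_pow, div_mul_div_comm, one_mul]
    rw [h6]
    exact h5
  have habs : |cv b u - cv b s| ≤
      ∑ k ∈ Finset.Ico s u, (1/2:ℝ)^(k-s) * (1 / ((Kd b s : ℝ) * Kd b (s+1))) := by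
    rw [← Real.dist_eq, dist_comm]
    calc dist (cv b s) (cv b u) ≤ ∑ k ∈ Finset.Ico s u, dist (cv b k) (cv b (k+1)) :=
          dist_le_Ico_sum_dist _ hu
      _ ≤ _ := Finset.sum_le_sum fun k hk => key k (Finset.mem_Ico.mp hk).1
  refine habs.trans ?_
  rw [← Finset.sum_mul]
  rw [show (2:ℝ) / ((Kd b s : ℝ) * Kd b (s+1)) = 2 * (1 / ((Kd b s : ℝ) * Kd b (s+1))) from by
    ring]
  apply mul_le_mul_of_nonneg_right _ (by positivity)
  have hre : ∑ k ∈ Finset.Ico s u, (1/2:ℝ)^(k-s) = ∑ j ∈ Finset.range (u - s), (1/2:ℝ)^j := by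
    rw [Finset.sum_Ico_eq_sum_range]
    apply Finset.sum_congr rfl
    intro j _
    congr 1
    omega
  rw [hre]
  calc ∑ j ∈ Finset.range (u - s), (1/2:ℝ)^j
      ≤ ∑' j : ℕ, (1/2:ℝ)^j := Summable.sum_le_tsum _ (fun _ _ => by positivity)
        (summable_geometric_of_lt_one (by norm_num) (by norm_num))
    _ = 2 := by rw [tsum_geometric_of_lt_one (by norm_num) (by norm_num)]; norm_num

lemma cfVal_close {s : ℕ} (hs : 1 ≤ s) :
    |cfVal b - cv b s| ≤ 2 / ((Kd b s : ℝ) * Kd b (s+1)) := by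
  have h : Tendsto (fun u => |cv b u - cv b s|) atTop (𝓝 |cfVal b - cv b s|) :=
    ((cv_tendsto hb).sub tendsto_const_nhds).abs
  apply le_of_tendsto h
  filter_upwards [eventually_ge_atTop s] with u hu using cv_partial_bound hb hs hu

lemma cfVal_far {s : ℕ} (hs : 1 ≤ s) : cfVal b ≠ cv b s := by
  have h1 : |cv b (s+1) - cv b s| = 1 / ((Kd b s : ℝ) * Kd b (s+1)) := cv_dist hb hs
  have h2 : |cfVal b - cv b (s+1)| ≤ 2 / ((Kd b (s+1) : ℝ) * Kd b (s+2)) :=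
    cfVal_close hb (by omega)
  have hgrow : 2 * Kd b s + 1 ≤ Kd b (s+2) := by
    have hA := Kd_fib hb s
    have hB : Kd b (s-1+1) + Kd b (s-1) ≤ Kd b (s-1+2) := Kd_fib hb (s-1)
    have hs1 : s - 1 + 1 = s := by omega
    have hs2 : s - 1 + 2 = s + 1 := by omega
    rw [hs1, hs2] at hB
    have := Kd_pos hb (s-1)
    omega
  have hK : (0:ℝ) < Kd b s := KdR_pos hb s
  have hK1 : (0:ℝ) < Kd b (s+1) := KdR_pos hb (s+1)
  have hK2 : (0:ℝ) < Kd b (s+2) := KdR_pos hb (s+2)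
  have hgR : 2 * (Kd b s : ℝ) + 1 ≤ Kd b (s+2) := by exact_mod_cast hgrow
  have hstrict : 2 / ((Kd b (s+1) : ℝ) * Kd b (s+2)) < 1 / ((Kd b s : ℝ) * Kd b (s+1)) := by
    rw [div_lt_div_iff₀ (by positivity) (by positivity)]
    nlinarith
  intro heq
  have htri : |cv b (s+1) - cv b s| ≤ |cfVal b - cv b s| + |cfVal b - cv b (s+1)| := by
    calc |cv b (s+1) - cv b s| = |(cfVal b - cv b s) - (cfVal b - cv b (s+1))| := by
          congr 1; ring
      _ ≤ _ := abs_sub _ _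
  have h0 : |cfVal b - cv b s| = 0 := by rw [heq, sub_self, abs_zero]
  rw [h0, zero_add, h1] at htri
  have := le_trans htri h2
  linarith

lemma cfVal_irrational : Irrational (cfVal b) := by
  rw [Irrational]
  rintro ⟨r, hr⟩
  set s : ℕ := 2 * r.den + 2 with hsdef
  have hs : 1 ≤ s := by omega
  have hden : (2 * r.den : ℕ) < Kd b (s+1) := by
    have := Kd_lb hb s
    omega
  have hne : cfVal b ≠ cv b s := cfVal_far hb hs
  have hclose := cfVal_close hb hs
  rw [← hr] at hne hclose
  have hK : (0:ℝ) < Kd b s := KdR_pos hb s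
  have hK1 : (0:ℝ) < Kd b (s+1) := KdR_pos hb (s+1)
  have hdpos : (0:ℝ) < (r.den : ℝ) := by exact_mod_cast r.pos
  have key : (r:ℝ) - cv b s
      = ((r.num * Kd b s - Kn b s * r.den : ℤ) : ℝ) / ((r.den:ℝ) * Kd b s) := by
    rw [Rat.cast_def]
    unfold cv
    push_cast
    field_simp
  have hdiff : (r:ℝ) - cv b s ≠ 0 := sub_ne_zero.mpr hne
  have hZ : ((r.num * Kd b s - Kn b s * r.den : ℤ) : ℝ) ≠ 0 := by
    intro h0
    apply hdiff
    rw [key, h0, zero_div]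
  have hZint : (r.num * Kd b s - Kn b s * r.den : ℤ) ≠ 0 := by
    intro h0
    apply hZ
    rw [h0]
    simp
  have hone : (1:ℝ) ≤ |((r.num * Kd b s - Kn b s * r.den : ℤ) : ℝ)| := by
    rw [← Int.cast_abs]
    exact_mod_cast Int.one_le_abs hZint
  have hlow : 1 / ((r.den : ℝ) * Kd b s) ≤ |(r:ℝ) - cv b s| := by
    rw [key, abs_div, abs_of_pos (show (0:ℝ) < (r.den:ℝ) * Kd b s by positivity),
      div_eq_mul_inv, div_eq_mul_inv]
    exact mul_le_mul_of_nonneg_right hone (by positivity)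
  have hcontra : 1 / ((r.den : ℝ) * Kd b s) ≤ 2 / ((Kd b s : ℝ) * Kd b (s+1)) :=
    le_trans hlow hclose
  rw [div_le_div_iff₀ (by positivity) (by positivity)] at hcontra
  have hdenR : (2 * r.den : ℝ) < Kd b (s+1) := by exact_mod_cast hden
  nlinarith

lemma cfVal_isCFOf : IsCFOf (cfVal b) b :=
  ⟨hb, cv_tendsto hb⟩

lemma cfVal_mem_Ioo : cfVal b ∈ Set.Ioo (0:ℝ) 1 := by
  obtain ⟨h0, h1⟩ := cfVal_mem hb
  have hirr := cfVal_irrational hb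
  constructor
  · rcases h0.lt_or_eq with h | h
    · exact h
    · exact absurd (hirr) (by rw [← h]; intro hc; exact hc ⟨0, by norm_num⟩)
  · rcases h1.lt_or_eq with h | h
    · exact h
    · exact absurd (hirr) (by rw [h]; intro hc; exact hc ⟨1, by norm_num⟩)

end pos2

lemma isCFOf_unique {x : ℝ} {b : ℕ → ℕ} (h : IsCFOf x b) : x = cfVal b :=
  tendsto_nhds_unique h.2 (cv_tendsto h.1)

end CF
namespace CF

lemma sqrt5_ge : (2:ℝ) ≤ Real.sqrt 5 := by
  rw [show (2:ℝ) = Real.sqrt 4 from by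
    rw [show (4:ℝ) = 2^2 by norm_num, Real.sqrt_sq (by norm_num)]]
  exact Real.sqrt_le_sqrt (by norm_num)

lemma sqrt5_le : Real.sqrt 5 ≤ 3 := by
  rw [show (3:ℝ) = Real.sqrt 9 from by
    rw [show (9:ℝ) = 3^2 by norm_num, Real.sqrt_sq (by norm_num)]]
  exact Real.sqrt_le_sqrt (by norm_num)

lemma one_lt_phi : (1:ℝ) < Phi := by
  unfold Phi; linarith [sqrt5_ge]

lemma phi_pos : (0:ℝ) < Phi := lt_trans one_pos one_lt_phi

lemma phi_le_two : Phi ≤ 2 := by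
  unfold Phi; linarith [sqrt5_le]

lemma phi_sq : Phi * Phi = Phi + 1 := by
  have hs : Real.sqrt 5 ^ 2 = 5 := Real.sq_sqrt (by norm_num)
  unfold Phi
  nlinarith [hs]

lemma phi_inv : (Phi)⁻¹ = Phi - 1 :=
  inv_eq_of_mul_eq_one_right (by nlinarith [phi_sq])

noncomputable def cw (a : ℕ → ℕ) (i : ℕ) : ℝ := if a i = 1 then Phi else (a i : ℝ) / Phi

lemma log12_ge : (3/2) * Real.log 2 + 2 * Real.log Phi ≤ Real.log 12 := by
  have h4 : Phi^4 ≤ 16 := by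
    calc Phi^4 ≤ 2^4 := pow_le_pow_left₀ (le_of_lt phi_pos) phi_le_two 4
      _ = 16 := by norm_num
  have h8 : (8:ℝ) * Phi^4 ≤ 144 := by nlinarith
  have hlog : Real.log (8 * Phi^4) ≤ Real.log 144 :=
    Real.log_le_log (mul_pos (by norm_num) (pow_pos phi_pos 4)) h8
  have e1 : Real.log (8 * Phi^4) = 3 * Real.log 2 + 4 * Real.log Phi := by
    rw [Real.log_mul (by norm_num) (ne_of_gt (pow_pos phi_pos 4)), Real.log_pow,
      show (8:ℝ) = 2^3 by norm_num, Real.log_pow]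
    push_cast
    ring
  have e2 : Real.log 144 = 2 * Real.log 12 := by
    rw [show (144:ℝ) = 12^2 by norm_num, Real.log_pow]
    push_cast
    ring
  rw [e1, e2] at hlog
  linarith


section contbound
variable {a : ℕ → ℕ} (hb : ∀ i, 0 < a i)
include hb

lemma cw_pos (i : ℕ) : 0 < cw a i := by
  unfold cw
  split
  · exact phi_pos
  · exact div_pos (by exact_mod_cast hb i) phi_pos

lemma M_step (t : ℕ) :
    cw a (t+1) * ((Kd a (t+1) : ℝ) + (Kd a t : ℝ) / Phi)
      ≤ (Kd a (t+2) : ℝ) + (Kd a (t+1) : ℝ) / Phi := by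
  have hrec : (Kd a (t+2) : ℝ) = (a (t+1) : ℝ) * Kd a (t+1) + Kd a t := by
    exact_mod_cast Kd_rec a t
  have hphi := phi_pos
  have hK := KdR_pos hb t
  have hK1 := KdR_pos hb (t+1)
  have hmono : (Kd a t : ℝ) ≤ Kd a (t+1) := by exact_mod_cast Kd_mono hb t
  simp only [div_eq_mul_inv, phi_inv]
  unfold cw
  rw [hrec]
  split
  · rename_i h1
    have e1 : (a (t+1) : ℝ) = 1 := by exact_mod_cast h1
    rw [e1]
    have : Phi * ((Kd a (t+1):ℝ) + (Kd a t:ℝ) * (Phi - 1))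
        = (1 * (Kd a (t+1):ℝ) + (Kd a t:ℝ)) + (Kd a (t+1):ℝ) * (Phi - 1)
        + (Kd a t : ℝ) * (Phi * Phi - Phi - 1) := by ring
    rw [this]
    nlinarith [phi_sq]
  · rename_i h1
    have hA : (1:ℝ) ≤ (a (t+1) : ℝ) := by exact_mod_cast hb (t+1)
    set A := (a (t+1) : ℝ)
    set K1 := (Kd a (t+1) : ℝ)
    set K0 := (Kd a t : ℝ)
    have hAp : 0 ≤ A * (Phi - 1) := by nlinarith [one_lt_phi]
    have h2 : (Phi - 1) * Phi = 1 := by nlinarith [phi_sq]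
    have e2 : K1 + K0 * (Phi - 1) ≤ K1 * Phi := by
      nlinarith [one_lt_phi]
    calc A * (Phi)⁻¹ * (K1 + K0 * (Phi - 1))
        = A * (Phi - 1) * (K1 + K0 * (Phi - 1)) := by rw [phi_inv]
      _ ≤ A * (Phi - 1) * (K1 * Phi) := by
          apply mul_le_mul_of_nonneg_left e2 hAp
      _ = A * K1 := by linear_combination (A * K1) * h2
      _ ≤ A * K1 + K0 + K1 * (Phi - 1) := by nlinarith [one_lt_phi]

lemma M_ge_P : ∀ t : ℕ, (∏ i ∈ Finset.range (t+1), cw a i)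
    ≤ (Kd a (t+1) : ℝ) + (Kd a t : ℝ) / Phi
  | 0 => by
      rw [Finset.prod_range_one]
      rw [Kd_one, Kd_zero]
      unfold cw
      simp only [div_eq_mul_inv, phi_inv]
      split
      · rename_i h1
        have e1 : (a 0 : ℝ) = 1 := by exact_mod_cast h1
        rw [e1]
        push_cast
        nlinarith [phi_sq, one_lt_phi]
      · have hA : (1:ℝ) ≤ (a 0 : ℝ) := by exact_mod_cast hb 0
        push_cast
        nlinarith [one_lt_phi, phi_sq]
  | (t+1) => by
      have ih := M_ge_P t
      rw [Finset.prod_range_succ]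
      have hc := cw_pos hb (t+1)
      calc (∏ i ∈ Finset.range (t+1), cw a i) * cw a (t+1)
          ≤ ((Kd a (t+1) : ℝ) + (Kd a t : ℝ) / Phi) * cw a (t+1) := by
            apply mul_le_mul_of_nonneg_right ih (le_of_lt hc)
        _ = cw a (t+1) * ((Kd a (t+1) : ℝ) + (Kd a t : ℝ) / Phi) := by ring
        _ ≤ _ := M_step hb t

lemma Kd_ge_P (t : ℕ) : (∏ i ∈ Finset.range t, cw a i) / Phi ≤ (Kd a t : ℝ) := by
  cases t with
  | zero =>
      rw [Finset.prod_range_zero, Kd_zero]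
      rw [div_le_iff₀ phi_pos]
      push_cast
      nlinarith [one_lt_phi]
  | succ t =>
      have h := M_ge_P hb t
      have hmono : (Kd a t : ℝ) ≤ Kd a (t+1) := by exact_mod_cast Kd_mono hb t
      have hK1 := KdR_pos hb (t+1)
      have h2 : (Kd a (t+1) : ℝ) + (Kd a t : ℝ)/Phi ≤ Phi * Kd a (t+1) := by
        simp only [div_eq_mul_inv, phi_inv]
        nlinarith [phi_sq, one_lt_phi]
      rw [div_le_iff₀ phi_pos]
      calc (∏ i ∈ Finset.range (t+1), cw a i) ≤ _ := h
        _ ≤ Phi * Kd a (t+1) := h2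
        _ = (Kd a (t+1) : ℝ) * Phi := by ring

lemma log_Kd_ge (hsize : ∀ i : ℕ, a i = 1 ∨ 11 < a i) (t : ℕ) :
    (t:ℝ) * Real.log Phi - Real.log Phi
      + (((Finset.range t).filter (fun i => 1 < a i)).card : ℝ)
        * (Real.log 12 - 2 * Real.log Phi)
      ≤ Real.log (Kd a t) := by
  set w := ((Finset.range t).filter (fun i => 1 < a i)).card with hw
  have hPpos : (0:ℝ) < ∏ i ∈ Finset.range t, cw a i :=
    Finset.prod_pos fun i _ => cw_pos hb i
  have step1 : Real.log ((∏ i ∈ Finset.range t, cw a i) / Phi) ≤ Real.log (Kd a t) :=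
    Real.log_le_log (div_pos hPpos phi_pos) (Kd_ge_P hb t)
  have step2 : Real.log ((∏ i ∈ Finset.range t, cw a i) / Phi)
      = (∑ i ∈ Finset.range t, Real.log (cw a i)) - Real.log Phi := by
    rw [Real.log_div (ne_of_gt hPpos) (ne_of_gt phi_pos),
      Real.log_prod fun i _ => ne_of_gt (cw_pos hb i)]
  have hsplit : (∑ i ∈ Finset.range t, Real.log (cw a i))
      = (∑ i ∈ (Finset.range t).filter (fun i => 1 < a i), Real.log (cw a i))
      + (∑ i ∈ (Finset.range t).filter (fun i => ¬ 1 < a i), Real.log (cw a i)) :=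
    (Finset.sum_filter_add_sum_filter_not _ _ _).symm
  have hbig : (w:ℝ) * (Real.log 12 - Real.log Phi)
      ≤ ∑ i ∈ (Finset.range t).filter (fun i => 1 < a i), Real.log (cw a i) := by
    rw [hw]
    rw [← nsmul_eq_mul]
    apply Finset.card_nsmul_le_sum
    intro i hi
    have h1 : 1 < a i := (Finset.mem_filter.mp hi).2
    have h12 : 12 ≤ a i := by rcases hsize i with h | h <;> omega
    have : cw a i = (a i : ℝ) / Phi := by unfold cw; rw [if_neg (by omega)]
    rw [this, Real.log_div (by positivity) (ne_of_gt phi_pos)]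
    have : Real.log 12 ≤ Real.log (a i) :=
      Real.log_le_log (by norm_num) (by exact_mod_cast h12)
    linarith
  have hsmall : ∑ i ∈ (Finset.range t).filter (fun i => ¬ 1 < a i), Real.log (cw a i)
      = ((t - w : ℕ) : ℝ) * Real.log Phi := by
    have hcard : ((Finset.range t).filter (fun i => ¬ 1 < a i)).card = t - w := by
      have := Finset.card_filter_add_card_filter_not
        (s := Finset.range t) (p := fun i => 1 < a i)
      simp only [Finset.card_range] at this
      omega
    rw [Finset.sum_congr rfl (fun i hi => ?_), Finset.sum_const, hcard, nsmul_eq_mul]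
    have h1 : ¬ 1 < a i := by
      have := (Finset.mem_filter.mp hi).2
      simpa using this
    have h2 : a i = 1 := by have := hb i; omega
    unfold cw
    rw [if_pos h2]
  have hwle : w ≤ t := by
    have := Finset.card_filter_le (Finset.range t) (fun i => 1 < a i)
    simpa using this
  have hcast : ((t - w : ℕ) : ℝ) = (t:ℝ) - w := by
    push_cast [Nat.cast_sub hwle]
    ring
  rw [step2, hsplit, hsmall, hcast] at step1
  have hlogphi : 0 ≤ Real.log Phi := Real.log_nonneg (le_of_lt one_lt_phi)
  nlinarith [hbig]

end contbound
end CF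
namespace CF

noncomputable def term (b : ℕ → ℕ) (k : ℕ) : ℝ :=
  (-1 : ℝ) ^ k * (2 : ℝ) ^ ((1 : ℤ) - (cfSum b (k+1) : ℤ))

lemma cfSum_succ (b : ℕ → ℕ) (t : ℕ) : cfSum b (t+1) = cfSum b t + b t :=
  Finset.sum_range_succ b t

section sums
variable {b : ℕ → ℕ} (hb : ∀ i, 0 < b i)
include hb

lemma cfSum_add_le (s : ℕ) : ∀ j : ℕ, cfSum b s + j ≤ cfSum b (s + j)
  | 0 => by simp
  | (j+1) => by
      have ih := cfSum_add_le s j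
      have := hb (s + j)
      rw [show s + (j+1) = (s+j)+1 from rfl, cfSum_succ]
      omega

lemma le_cfSum (k : ℕ) : k ≤ cfSum b k := by
  have := cfSum_add_le hb 0 k
  simpa [cfSum] using this

lemma term_abs (k : ℕ) : |term b k| = (2:ℝ) ^ ((1 : ℤ) - (cfSum b (k+1) : ℤ)) := by
  unfold term
  rw [abs_mul, abs_pow, abs_neg, abs_one, one_pow, one_mul,
    abs_of_pos (zpow_pos (by norm_num : (0:ℝ) < 2) _)]

lemma term_abs_le (k : ℕ) : |term b k| ≤ (1/2:ℝ)^k := by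
  rw [term_abs hb k]
  have h1 : ((1:ℤ) - (cfSum b (k+1) : ℤ)) ≤ -(k:ℤ) := by
    have := le_cfSum hb (k+1)
    omega
  calc (2:ℝ) ^ ((1 : ℤ) - (cfSum b (k+1) : ℤ)) ≤ (2:ℝ) ^ (-(k:ℤ)) :=
        zpow_le_zpow_right₀ (by norm_num) h1
    _ = (1/2:ℝ)^k := by
        rw [zpow_neg, zpow_natCast, one_div, inv_pow]

lemma summable_abs_term : Summable (fun k => |term b k|) :=
  Summable.of_nonneg_of_le (fun k => abs_nonneg _) (term_abs_le hb)
    (summable_geometric_of_lt_one (by norm_num) (by norm_num))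

lemma summable_term : Summable (term b) :=
  (summable_abs_term hb).of_abs

end sums

lemma alt_lower {c : ℕ → ℝ} (hdec : ∀ j, c (j+1) ≤ c j) (hsum : Summable c) :
    c 0 - c 1 ≤ ∑' j, (-1:ℝ)^j * c j := by
  have hinj2 : Function.Injective (fun k : ℕ => 2*k) := fun m n h => by
    simpa using h
  have hinj2' : Function.Injective (fun k : ℕ => 2*k+1) := fun m n h => by
    simp only at h
    omega
  have hse : Summable (fun k => c (2*k)) := hsum.comp_injective hinj2
  have hso : Summable (fun k => c (2*k+1)) := hsum.comp_injective hinj2'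
  have he : Summable (fun k => ((-1:ℝ)^(2*k) * c (2*k))) := by
    have e : (fun k => ((-1:ℝ)^(2*k) * c (2*k))) = fun k => c (2*k) := by
      funext k
      rw [pow_mul]
      norm_num
    rw [e]
    exact hse
  have ho : Summable (fun k => ((-1:ℝ)^(2*k+1) * c (2*k+1))) := by
    have e : (fun k => ((-1:ℝ)^(2*k+1) * c (2*k+1))) = fun k => -c (2*k+1) := by
      funext k
      rw [pow_succ, pow_mul]
      norm_num
    rw [e]
    exact hso.neg
  have key := tsum_even_add_odd (f := fun j => (-1:ℝ)^j * c j) he ho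
  have e1 : ∑' k, ((-1:ℝ)^(2*k) * c (2*k)) = ∑' k, c (2*k) := by
    apply tsum_congr
    intro k
    rw [pow_mul]
    norm_num
  have e2 : ∑' k, ((-1:ℝ)^(2*k+1) * c (2*k+1)) = - ∑' k, c (2*k+1) := by
    rw [← tsum_neg]
    apply tsum_congr
    intro k
    rw [pow_succ, pow_mul]
    norm_num
  rw [e1, e2] at key
  rw [← key]
  have hsub : ∑' k, c (2*k) - ∑' k, c (2*k+1) = ∑' k, (c (2*k) - c (2*k+1)) :=
    (Summable.tsum_sub hse hso).symm
  rw [show ∑' k, c (2*k) + - ∑' k, c (2*k+1) = ∑' k, c (2*k) - ∑' k, c (2*k+1) from by ring,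
    hsub]
  have hterm0 : c 0 - c 1 = (fun k => c (2*k) - c (2*k+1)) 0 := by norm_num
  rw [hterm0]
  apply Summable.le_tsum (hse.sub hso) 0
  intro j _
  have := hdec (2*j)
  simp only [sub_nonneg]
  exact this

/-- lower bound for the absolute value of the series tail -/
lemma tail_lower {b : ℕ → ℕ} (hb : ∀ i, 0 < b i) (t : ℕ) :
    (2:ℝ) ^ (-(cfSum b (t+1) : ℤ)) ≤ |∑' j : ℕ, term b (j + t)| := by
  set c : ℕ → ℝ := fun j => (2:ℝ) ^ ((1:ℤ) - (cfSum b (j + t + 1) : ℤ)) with hc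
  have hterm : ∀ j, term b (j + t) = (-1:ℝ)^t * ((-1:ℝ)^j * c j) := by
    intro j
    unfold term
    rw [hc]
    rw [pow_add]
    ring
  have hdec : ∀ j, c (j+1) ≤ c j := by
    intro j
    apply zpow_le_zpow_right₀ (by norm_num : (1:ℝ) ≤ 2)
    have h1 : cfSum b (j + t + 1) + 1 ≤ cfSum b (j + 1 + t + 1) := by
      have := cfSum_add_le hb (j + t + 1) 1
      rw [show j + t + 1 + 1 = j + 1 + t + 1 by ring] at this
      omega
    omega
  have hcsum : Summable c := by
    have : Summable (fun j => |term b (j + t)|) :=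
      (summable_nat_add_iff t).mpr (summable_abs_term hb)
    have e : (fun j => |term b (j + t)|) = c := by
      funext j
      rw [term_abs hb]
    rwa [e] at this
  have halt := alt_lower hdec hcsum
  have hrw : ∑' j : ℕ, term b (j + t) = (-1:ℝ)^t * ∑' j, ((-1:ℝ)^j * c j) := by
    rw [← tsum_mul_left]
    exact tsum_congr hterm
  rw [hrw, abs_mul, abs_pow, abs_neg, abs_one, one_pow, one_mul]
  have hc0 : c 0 = (2:ℝ) ^ ((1:ℤ) - (cfSum b (t+1) : ℤ)) := by
    rw [hc]
    norm_num
  have hc1 : c 1 ≤ (2:ℝ) ^ (-(cfSum b (t+1) : ℤ)) := by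
    rw [hc]
    apply zpow_le_zpow_right₀ (by norm_num : (1:ℝ) ≤ 2)
    have h1 : cfSum b (t + 1) + 1 ≤ cfSum b (1 + t + 1) := by
      have := cfSum_add_le hb (t+1) 1
      rw [show t + 1 + 1 = 1 + t + 1 by ring] at this
      omega
    omega
  have hval : (2:ℝ) ^ (-(cfSum b (t+1) : ℤ)) ≤ c 0 - c 1 := by
    rw [hc0]
    have e : ((1:ℤ) - (cfSum b (t+1) : ℤ)) = (-(cfSum b (t+1):ℤ)) + 1 := by ring
    rw [e, zpow_add₀ (by norm_num : (2:ℝ) ≠ 0)]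
    have hcpos : (0:ℝ) < (2:ℝ) ^ (-(cfSum b (t+1) : ℤ)) := zpow_pos (by norm_num) _
    rw [zpow_one]
    linarith [hc1]
  calc (2:ℝ) ^ (-(cfSum b (t+1) : ℤ)) ≤ c 0 - c 1 := hval
    _ ≤ ∑' j, ((-1:ℝ)^j * c j) := halt
    _ ≤ |∑' j, ((-1:ℝ)^j * c j)| := le_abs_self _

/-- upper bound for the series tail when subsequent partial quotients are all 1 -/
lemma tail_upper {b : ℕ → ℕ} (hb : ∀ i, 0 < b i) (t : ℕ)
    (hones : ∀ i, t < i → b i = 1) :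
    |∑' j : ℕ, term b (j + t)| ≤ (2:ℝ) ^ ((2:ℤ) - (cfSum b (t+1) : ℤ)) := by
  have hsum : Summable (fun j => term b (j + t)) :=
    (summable_nat_add_iff t).mpr (summable_term hb)
  have habs : Summable (fun j => |term b (j + t)|) :=
    (summable_nat_add_iff t).mpr (summable_abs_term hb)
  have hS : ∀ j : ℕ, cfSum b (j + t + 1) = cfSum b (t + 1) + j := by
    intro j
    induction j with
    | zero => norm_num
    | succ j ih =>
        rw [show j + 1 + t + 1 = (j + t + 1) + 1 from by ring, cfSum_succ, ih,
          hones (j + t + 1) (by omega)]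
        ring
  have hle : ∀ j, |term b (j + t)| ≤ (2:ℝ)^((1:ℤ) - (cfSum b (t+1):ℤ)) * (1/2:ℝ)^j := by
    intro j
    rw [term_abs hb, hS j]
    rw [show ((1:ℤ) - ((cfSum b (t+1) + j : ℕ) : ℤ)) = ((1:ℤ) - (cfSum b (t+1):ℤ)) + (-(j:ℤ))
      from by push_cast; ring]
    rw [zpow_add₀ (by norm_num : (2:ℝ) ≠ 0)]
    apply mul_le_mul_of_nonneg_left _ (le_of_lt (zpow_pos (by norm_num) _))
    rw [zpow_neg, zpow_natCast, one_div, inv_pow]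
  calc |∑' j : ℕ, term b (j + t)| ≤ ∑' j, |term b (j + t)| := by
        rw [← Real.norm_eq_abs]
        refine (norm_tsum_le_tsum_norm ?_).trans_eq ?_
        · simpa [Real.norm_eq_abs] using habs
        · simp [Real.norm_eq_abs]
    _ ≤ ∑' j, (2:ℝ)^((1:ℤ) - (cfSum b (t+1):ℤ)) * (1/2:ℝ)^j := by
        apply Summable.tsum_le_tsum hle habs
        exact (summable_geometric_of_lt_one (by norm_num) (by norm_num)).mul_left _
    _ = (2:ℝ)^((1:ℤ) - (cfSum b (t+1):ℤ)) * 2 := by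
        rw [tsum_mul_left, tsum_geometric_of_lt_one (by norm_num) (by norm_num)]
        norm_num
    _ = (2:ℝ) ^ ((2:ℤ) - (cfSum b (t+1) : ℤ)) := by
        rw [show ((2:ℤ) - (cfSum b (t+1):ℤ)) = ((1:ℤ) - (cfSum b (t+1):ℤ)) + 1 from by ring,
          zpow_add₀ (by norm_num : (2:ℝ) ≠ 0), zpow_one]

end CF

namespace CF

lemma agree_Kd {a b : ℕ → ℕ} {t s : ℕ} (hs : s ≤ t) (hagree : ∀ i, i < t → b i = a i) :
    Kd b s = Kd a s := by
  have hlist : (List.range s).map b = (List.range s).map a :=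
    List.map_congr_left fun i hi => hagree i (lt_of_lt_of_le (List.mem_range.mp hi) hs)
  unfold Kd
  rw [hlist]

lemma agree_Kn {a b : ℕ → ℕ} {t s : ℕ} (hs : s ≤ t) (hagree : ∀ i, i < t → b i = a i) :
    Kn b s = Kn a s := by
  have hlist : (List.range s).map b = (List.range s).map a :=
    List.map_congr_left fun i hi => hagree i (lt_of_lt_of_le (List.mem_range.mp hi) hs)
  unfold Kn
  rw [hlist]

lemma agree_cfSum {a b : ℕ → ℕ} {t s : ℕ} (hs : s ≤ t) (hagree : ∀ i, i < t → b i = a i) :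
    cfSum b s = cfSum a s :=
  Finset.sum_congr rfl fun i hi =>
    hagree i (lt_of_lt_of_le (Finset.mem_range.mp hi) hs)

lemma Qdiff_ge {a b : ℕ → ℕ} (hpa : ∀ i, 0 < a i) (hpb : ∀ i, 0 < b i) (t : ℕ)
    (hagree : ∀ i, i < t → b i = a i) (hbt : b t = a t + 3) (hones : ∀ i, t < i → b i = 1) :
    (2:ℝ) ^ (-(cfSum a (t+1) : ℤ) - 1) ≤ |(∑' k, term a k) - ∑' k, term b k| := by
  have hsa := summable_term hpa
  have hsb := summable_term hpb
  have hA := Summable.sum_add_tsum_nat_add t hsa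
  have hB := Summable.sum_add_tsum_nat_add t hsb
  have hheads : ∑ i ∈ Finset.range t, term a i = ∑ i ∈ Finset.range t, term b i := by
    apply Finset.sum_congr rfl
    intro k hk
    have hk' : k < t := Finset.mem_range.mp hk
    unfold term
    rw [agree_cfSum (show k+1 ≤ t by omega) hagree]
  have hdiff : (∑' k, term a k) - ∑' k, term b k
      = (∑' i, term a (i + t)) - ∑' i, term b (i + t) := by
    rw [← hA, ← hB, hheads]
    ring
  have htau := tail_lower hpa t
  have htb := tail_upper hpb t hones
  have hSb : cfSum b (t+1) = cfSum a (t+1) + 3 := by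
    rw [cfSum_succ, cfSum_succ, agree_cfSum le_rfl hagree, hbt]
    ring
  have htb2 : |∑' i : ℕ, term b (i + t)| ≤ (2:ℝ) ^ (-(cfSum a (t+1) : ℤ) - 1) := by
    refine htb.trans_eq ?_
    rw [hSb]
    congr 1
    push_cast
    ring
  have habs : |∑' i : ℕ, term a (i + t)| - |∑' i : ℕ, term b (i + t)|
      ≤ |(∑' i : ℕ, term a (i + t)) - ∑' i : ℕ, term b (i + t)| :=
    abs_sub_abs_le_abs_sub _ _
  have hsplit : (2:ℝ) ^ (-(cfSum a (t+1) : ℤ))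
      = (2:ℝ) ^ (-(cfSum a (t+1) : ℤ) - 1) * 2 := by
    rw [← zpow_add_one₀ (by norm_num : (2:ℝ) ≠ 0)]
    congr 1
    ring
  rw [hdiff]
  have h2 : (2:ℝ) ^ (-(cfSum a (t+1) : ℤ)) ≤ |∑' i : ℕ, term a (i + t)| := htau
  linarith [h2, htb2, habs, hsplit.le, hsplit.ge]

end CF

/-- If `?'(x) = 0` and every partial quotient is `1` or greater than `11`, then eventually
`S_x(t) - κ₁ t > 3 w(A_t)`, where `w(A_t)` counts the partial quotients among
`a_1,…,a_t` that are greater than `1`. -/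
theorem stmt10 (x : ℝ) (hx : x ∈ Set.Ioo (0:ℝ) 1) (hirr : Irrational x)
    (a : ℕ → ℕ) (ha : IsCFOf x a)
    (hsize : ∀ i : ℕ, a i = 1 ∨ 11 < a i)
    (Q : ℝ → ℝ) (hQ : IsMinkowski Q) (hder : HasDerivAt Q 0 x) :
    ∃ T : ℕ, ∀ t : ℕ, T < t →
      (cfSum a t : ℝ) - kappa1 * t >
        3 * (((Finset.range t).filter (fun i => 1 < a i)).card : ℝ) := by
  classical
  obtain ⟨hQc, hQm, hQ0, hQ1, hQser⟩ := hQ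
  have hpa : ∀ i, 0 < a i := ha.1
  have hxv : x = CF.cfVal a := CF.isCFOf_unique ha
  have hQx : Q x = ∑' k, CF.term a k := hQser x hx hirr a ha
  -- the comparison sequences
  set bs : ℕ → ℕ → ℕ := fun t i => if i < t then a i else if i = t then a t + 3 else 1
    with hbs
  have hpb : ∀ t i, 0 < bs t i := by
    intro t i
    simp only [hbs]
    split
    · exact hpa i
    · split
      · have := hpa t; omega
      · norm_num
  have hagree : ∀ t i, i < t → bs t i = a i := by
    intro t i hi
    simp only [hbs, if_pos hi]
  have hbt : ∀ t, bs t t = a t + 3 := by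
    intro t
    simp only [hbs]
    simp
  have hones : ∀ t i, t < i → bs t i = 1 := by
    intro t i hi
    simp only [hbs]
    rw [if_neg (by omega), if_neg (by omega)]
  set y : ℕ → ℝ := fun t => CF.cfVal (bs t) with hy
  have hQy : ∀ t, Q (y t) = ∑' k, CF.term (bs t) k := fun t =>
    hQser (y t) (CF.cfVal_mem_Ioo (hpb t)) (CF.cfVal_irrational (hpb t)) (bs t)
      (CF.cfVal_isCFOf (hpb t))
  -- distance bound
  have hxy : ∀ t, 1 ≤ t → |x - y t| ≤ 4 / ((CF.Kd a t : ℝ))^2 := by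
    intro t ht
    have hq := CF.KdR_pos hpa t
    have hq1 : (CF.Kd a t : ℝ) ≤ (CF.Kd a (t+1) : ℝ) := by
      exact_mod_cast CF.Kd_mono hpa t
    have hx1 : |x - CF.cv a t| ≤ 2 / ((CF.Kd a t : ℝ) * CF.Kd a (t+1)) := by
      rw [hxv]
      exact CF.cfVal_close hpa ht
    have hKdeq : CF.Kd (bs t) t = CF.Kd a t := CF.agree_Kd le_rfl (hagree t)
    have hcveq : CF.cv (bs t) t = CF.cv a t := by
      unfold CF.cv
      rw [hKdeq, CF.agree_Kn le_rfl (hagree t)]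
    have hq1b : (CF.Kd a t : ℝ) ≤ (CF.Kd (bs t) (t+1) : ℝ) := by
      have h1 : CF.Kd (bs t) t ≤ CF.Kd (bs t) (t+1) := CF.Kd_mono (hpb t) t
      rw [hKdeq] at h1
      exact_mod_cast h1
    have hy1 : |y t - CF.cv a t| ≤ 2 / ((CF.Kd a t : ℝ) * CF.Kd (bs t) (t+1)) := by
      rw [← hcveq]
      have := CF.cfVal_close (hpb t) ht
      rwa [hKdeq] at this
    have hb1 : 2 / ((CF.Kd a t : ℝ) * CF.Kd a (t+1)) ≤ 2 / ((CF.Kd a t : ℝ))^2 := by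
      apply div_le_div_of_nonneg_left (by norm_num) (by positivity)
      nlinarith
    have hb2 : 2 / ((CF.Kd a t : ℝ) * CF.Kd (bs t) (t+1)) ≤ 2 / ((CF.Kd a t : ℝ))^2 := by
      apply div_le_div_of_nonneg_left (by norm_num) (by positivity)
      nlinarith
    calc |x - y t| = |(x - CF.cv a t) - (y t - CF.cv a t)| := by congr 1; ring
      _ ≤ |x - CF.cv a t| + |y t - CF.cv a t| := abs_sub _ _
      _ ≤ 2 / ((CF.Kd a t : ℝ))^2 + 2 / ((CF.Kd a t : ℝ))^2 := by
          linarith [hx1.trans hb1, hy1.trans hb2]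
      _ = 4 / ((CF.Kd a t : ℝ))^2 := by ring
  -- y t tends to x
  have hyx : Tendsto y atTop (𝓝 x) := by
    rw [tendsto_iff_dist_tendsto_zero]
    apply squeeze_zero' (by filter_upwards with t using dist_nonneg)
      (g := fun t : ℕ => 4 / (t:ℝ))
    · filter_upwards [eventually_ge_atTop 1] with t ht
      have hKt : (t:ℝ) ≤ (CF.Kd a t : ℝ) := by
        have h := CF.Kd_lb hpa (t-1)
        have e : t - 1 + 1 = t := by omega
        rw [e] at h
        exact_mod_cast h
      have htpos : (0:ℝ) < t := by exact_mod_cast ht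
      calc dist (y t) x = |x - y t| := by rw [dist_comm, Real.dist_eq, abs_sub_comm]
        _ ≤ 4 / ((CF.Kd a t : ℝ))^2 := hxy t ht
        _ ≤ 4 / (t:ℝ) := by
            have hq1 : (1:ℝ) ≤ (CF.Kd a t : ℝ) := by
              exact_mod_cast CF.Kd_pos hpa t
            have hqq : (CF.Kd a t:ℝ) ≤ (CF.Kd a t:ℝ)^2 := by nlinarith
            apply div_le_div_of_nonneg_left (by norm_num) htpos
            linarith
    · exact tendsto_const_div_atTop_nhds_zero_nat 4
  -- series difference lower bound
  have hlow : ∀ t, (2:ℝ) ^ (-(cfSum a (t+1) : ℤ) - 1) ≤ |Q x - Q (y t)| := by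
    intro t
    rw [hQx, hQy t]
    exact CF.Qdiff_ge hpa (hpb t) t (hagree t) (hbt t) (hones t)
  -- little-o from the derivative
  have hlo : (fun u => Q u - Q x) =o[𝓝 x] fun u => u - x := by
    have h := hasDerivAt_iff_isLittleO.mp hder
    simpa using h
  have hc : (0:ℝ) < (2:ℝ)^(-(11:ℤ)) := zpow_pos (by norm_num) _
  have hO := hlo.def hc
  have hEv1 : ∀ᶠ t in atTop, ‖Q (y t) - Q x‖ ≤ (2:ℝ)^(-(11:ℤ)) * ‖y t - x‖ :=
    hyx.eventually hO
  -- key eventual log inequality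
  have hEv : ∀ᶠ t in atTop, 8 * Real.log 2 + 2 * Real.log (CF.Kd a t)
      ≤ (cfSum a (t+1) : ℝ) * Real.log 2 := by
    filter_upwards [hEv1, eventually_ge_atTop 1] with t hQle ht1
    have hq : (0:ℝ) < (CF.Kd a t : ℝ) := CF.KdR_pos hpa t
    have hchain : (2:ℝ) ^ (-(cfSum a (t+1) : ℤ) - 1)
        ≤ (2:ℝ)^(-(11:ℤ)) * (4 / ((CF.Kd a t : ℝ))^2) := by
      have h1 := hlow t
      have h2 : |Q x - Q (y t)| = ‖Q (y t) - Q x‖ := by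
        rw [Real.norm_eq_abs, abs_sub_comm]
      have h3 : ‖y t - x‖ = |x - y t| := by rw [Real.norm_eq_abs, abs_sub_comm]
      have h4 := hxy t ht1
      calc (2:ℝ) ^ (-(cfSum a (t+1) : ℤ) - 1) ≤ |Q x - Q (y t)| := h1
        _ = ‖Q (y t) - Q x‖ := h2
        _ ≤ (2:ℝ)^(-(11:ℤ)) * ‖y t - x‖ := hQle
        _ = (2:ℝ)^(-(11:ℤ)) * |x - y t| := by rw [h3]
        _ ≤ _ := by
            apply mul_le_mul_of_nonneg_left h4 (le_of_lt hc)
    have hlog := Real.log_le_log (zpow_pos (by norm_num) _) hchain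
    rw [Real.log_zpow] at hlog
    have hrhs : Real.log ((2:ℝ)^(-(11:ℤ)) * (4 / ((CF.Kd a t : ℝ))^2))
        = -11 * Real.log 2 + 2 * Real.log 2 - 2 * Real.log (CF.Kd a t) := by
      rw [Real.log_mul (ne_of_gt hc) (by positivity),
        Real.log_div (by norm_num) (by positivity),
        Real.log_zpow, Real.log_pow,
        show (4:ℝ) = 2^2 by norm_num, Real.log_pow]
      push_cast
      ring
    rw [hrhs] at hlog
    push_cast at hlog
    linarith
  obtain ⟨T₀, hT₀⟩ := eventually_atTop.mp hEv
  refine ⟨T₀ + 1, ?_⟩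
  intro t' ht'
  set t := t' - 1 with htdef
  have htt : t + 1 = t' := by omega
  have h1 := hT₀ t (by omega)
  rw [htt] at h1
  have h2 := CF.log_Kd_ge hpa hsize t
  have h3 := CF.log12_ge
  have hstep : ((Finset.range t').filter (fun i => 1 < a i)).card
      ≤ ((Finset.range t).filter (fun i => 1 < a i)).card + 1 := by
    rw [← htt, Finset.range_add_one, Finset.filter_insert]
    split
    · exact Finset.card_insert_le _ _
    · omega
  have hL2 : (0:ℝ) < Real.log 2 := Real.log_pos (by norm_num)
  have hphile : Real.log Phi ≤ Real.log 2 := Real.log_le_log CF.phi_pos CF.phi_le_two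
  have hphinn : (0:ℝ) ≤ Real.log Phi := Real.log_nonneg (le_of_lt CF.one_lt_phi)
  have hk : kappa1 * Real.log 2 = 2 * Real.log Phi := by
    unfold kappa1
    field_simp
  set wt : ℝ := (((Finset.range t).filter (fun i => 1 < a i)).card : ℝ) with hwt
  set wt' : ℝ := (((Finset.range t').filter (fun i => 1 < a i)).card : ℝ) with hwt'
  have hwt0 : 0 ≤ wt := by rw [hwt]; positivity
  have hstepR : wt' ≤ wt + 1 := by
    rw [hwt, hwt']
    exact_mod_cast hstep
  have f1 : wt * ((3/2) * Real.log 2) ≤ wt * (Real.log 12 - 2 * Real.log Phi) :=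
    mul_le_mul_of_nonneg_left (by linarith) hwt0
  have f3 : kappa1 * (t':ℝ) * Real.log 2 = 2 * (t':ℝ) * Real.log Phi := by
    linear_combination (t':ℝ) * hk
  have hcast : ((t':ℕ):ℝ) = (t:ℝ) + 1 := by
    rw [← htt]
    push_cast
    ring
  have hbig : ((cfSum a t' : ℝ) - kappa1 * t' - 3 * wt') * Real.log 2 ≥ 1 * Real.log 2 := by
    have e1 : ((cfSum a t' : ℝ) - kappa1 * t' - 3 * wt') * Real.log 2
        = (cfSum a t' : ℝ) * Real.log 2 - kappa1 * (t':ℝ) * Real.log 2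
          - 3 * wt' * Real.log 2 := by ring
    rw [e1, f3]
    have f2 : 3 * wt' * Real.log 2 ≤ 3 * (wt + 1) * Real.log 2 := by
      apply mul_le_mul_of_nonneg_right _ hL2.le
      linarith
    rw [hcast]
    nlinarith [h1, h2, f1, f2]
  have hfin : (1:ℝ) ≤ (cfSum a t' : ℝ) - kappa1 * t' - 3 * wt' := by
    have := le_of_mul_le_mul_right (by linarith [hbig] : 1 * Real.log 2
      ≤ ((cfSum a t' : ℝ) - kappa1 * t' - 3 * wt') * Real.log 2) hL2
    linarith
  linarith
end

section
/- Let x = [0;a_1,a_2,…] ∈ (0,1) be irrational such that the derivative ?'(x) of the Minkowski question-mark function exists at x and equals 0. Then for every c > 0 there exists T such that for all t ≥ T and every partition of the sequence (a_1,…,a_t) into consecutive blocks B_1, B_2, …, B_m, one has ∏_{j=1}^m ⟨B_j⟩ < c · (√2)^{S_x(t)}. -/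
open Filter Topology

namespace S11

lemma contAux_cons_cons (a b : ℕ) (l : List ℕ) :
    contAux (a :: b :: l) = a * contAux (b :: l) + contAux l := rfl

lemma one_le_contAux : ∀ l : List ℕ, (∀ x ∈ l, 0 < x) → 1 ≤ contAux l
  | [], _ => le_refl 1
  | [a], h => h a (by simp)
  | a :: b :: l, h => by
    have h1 := one_le_contAux (b :: l) (fun x hx => h x (List.mem_cons_of_mem _ hx))
    have ha := h a (by simp)
    rw [contAux_cons_cons]
    calc 1 ≤ a * contAux (b :: l) := Nat.one_le_iff_ne_zero.2 (by positivity)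
    _ ≤ _ := Nat.le_add_right _ _

lemma contAux_mul_le : ∀ X Y : List ℕ, contAux X * contAux Y ≤ contAux (X ++ Y)
  | [], Y => by simp [contAux]
  | [a], Y => by
    cases Y with
    | nil => simp [contAux]
    | cons y Y' =>
      show a * contAux (y :: Y') ≤ contAux (a :: y :: Y')
      rw [contAux_cons_cons]; exact Nat.le_add_right _ _
  | a :: b :: X', Y => by
    have h1 := contAux_mul_le (b :: X') Y
    have h2 := contAux_mul_le X' Y
    show contAux (a :: b :: X') * contAux Y ≤ contAux (a :: b :: (X' ++ Y))
    rw [contAux_cons_cons, contAux_cons_cons]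
    calc (a * contAux (b :: X') + contAux X') * contAux Y
        = a * (contAux (b :: X') * contAux Y) + contAux X' * contAux Y := by ring
      _ ≤ a * contAux (b :: X' ++ Y) + contAux (X' ++ Y) := by
          exact Nat.add_le_add (Nat.mul_le_mul_left a h1) h2
      _ = _ := rfl

lemma cont_mul_le (A B : List ℕ) : cont A * cont B ≤ cont (A ++ B) := by
  unfold cont
  rw [List.reverse_append, mul_comm]
  exact contAux_mul_le B.reverse A.reverse

lemma prod_le_cont_flatten : ∀ L : List (List ℕ), (L.map cont).prod ≤ cont L.flatten
  | [] => le_refl 1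
  | B :: L => by
    calc ((B :: L).map cont).prod = cont B * (L.map cont).prod := by simp
    _ ≤ cont B * cont L.flatten :=
        Nat.mul_le_mul_left _ (prod_le_cont_flatten L)
    _ ≤ cont (B ++ L.flatten) := cont_mul_le _ _
    _ = cont (B :: L).flatten := by simp


def qd (b : ℕ → ℕ) (n : ℕ) : ℕ := cont ((List.range n).map b)
def pnum (b : ℕ → ℕ) (n : ℕ) : ℕ := cont (((List.range n).map b).tail)
noncomputable def rv (b : ℕ → ℕ) (n : ℕ) : ℝ :=
  (cont (((List.range n).map b).tail) : ℝ) / (cont ((List.range n).map b) : ℝ)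

lemma rv_eq (b : ℕ → ℕ) (n : ℕ) : rv b n = (pnum b n : ℝ) / (qd b n : ℝ) := rfl

lemma qd_zero (b : ℕ → ℕ) : qd b 0 = 1 := rfl

lemma qd_one (b : ℕ → ℕ) : qd b 1 = b 0 := by
  simp [qd, cont, List.range_succ, contAux]

lemma rev_map_range_succ (b : ℕ → ℕ) (m : ℕ) :
    ((List.range (m+1)).map b).reverse = b m :: ((List.range m).map b).reverse := by
  simp [List.range_succ]

lemma qd_rec (b : ℕ → ℕ) (n : ℕ) :
    qd b (n+2) = b (n+1) * qd b (n+1) + qd b n := by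
  unfold qd cont
  rw [rev_map_range_succ b (n+1), rev_map_range_succ b n, contAux_cons_cons,
    ← rev_map_range_succ b n]

lemma pnum_zero (b : ℕ → ℕ) : pnum b 0 = 1 := rfl

lemma pnum_succ (b : ℕ → ℕ) (n : ℕ) : pnum b (n+1) = qd (fun i => b (i+1)) n := by
  unfold pnum qd
  congr 1
  rw [List.range_succ_eq_map]
  simp [List.map_map]

lemma pnum_one (b : ℕ → ℕ) : pnum b 1 = 1 := by rw [pnum_succ]; rfl

lemma pnum_two (b : ℕ → ℕ) : pnum b 2 = b 1 := by rw [pnum_succ, qd_one]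

lemma pnum_rec (b : ℕ → ℕ) (n : ℕ) :
    pnum b (n+3) = b (n+2) * pnum b (n+2) + pnum b (n+1) := by
  rw [pnum_succ, pnum_succ, pnum_succ, qd_rec]

section pos
variable {b : ℕ → ℕ} (hb : ∀ i, 0 < b i)
include hb

lemma qd_pos (n : ℕ) : 0 < qd b n := by
  apply one_le_contAux
  intro x hx
  rw [List.mem_reverse] at hx
  obtain ⟨i, _, rfl⟩ := List.mem_map.1 hx
  exact hb i

lemma pnum_pos (n : ℕ) : 0 < pnum b n := by
  apply one_le_contAux
  intro x hx
  rw [List.mem_reverse] at hx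
  have := List.mem_of_mem_tail hx
  obtain ⟨i, _, rfl⟩ := List.mem_map.1 this
  exact hb i

lemma qd_le_succ (n : ℕ) : qd b n ≤ qd b (n+1) := by
  cases n with
  | zero => rw [qd_zero, qd_one]; exact hb 0
  | succ m =>
    rw [qd_rec]
    calc qd b (m+1) = 1 * qd b (m+1) := (one_mul _).symm
    _ ≤ b (m+1) * qd b (m+1) := Nat.mul_le_mul_right _ (hb _)
    _ ≤ _ := Nat.le_add_right _ _

lemma qd_lt_two (n : ℕ) : qd b n < qd b (n+2) := by
  rw [qd_rec]
  have h1 : 0 < b (n+1) * qd b (n+1) := Nat.mul_pos (hb _) (qd_pos hb _)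
  omega

lemma self_le_qd : ∀ n, n ≤ qd b n
  | 0 => by simp
  | 1 => by rw [qd_one]; exact hb 0
  | (n+2) => by
    rw [qd_rec]
    have h1 := self_le_qd (n+1)
    have h2 := qd_pos hb n
    have h3 := hb (n+1)
    nlinarith

lemma det : ∀ n, 1 ≤ n →
    (pnum b (n+1) : ℤ) * qd b n = pnum b n * qd b (n+1) + (-1)^n
  | 0, h => by omega
  | 1, _ => by
    rw [pnum_two, pnum_one, qd_one, qd_rec, qd_one, qd_zero]
    push_cast; ring
  | (n+2), _ => by
    have ih := det (n+1) (by omega)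
    have e1 := pnum_rec b n
    have e2 := qd_rec b (n+1)
    rw [e1, e2]
    push_cast
    push_cast at ih
    linear_combination -ih

lemma rv_diff (n : ℕ) (hn : 1 ≤ n) :
    rv b (n+1) - rv b n = (-1)^n / ((qd b n : ℝ) * qd b (n+1)) := by
  have hd := det hb n hn
  have h1 : (0:ℝ) < qd b n := by exact_mod_cast qd_pos hb n
  have h2 : (0:ℝ) < qd b (n+1) := by exact_mod_cast qd_pos hb (n+1)
  rw [rv_eq, rv_eq]
  have : ((pnum b (n+1) : ℝ)) * qd b n = pnum b n * qd b (n+1) + (-1)^n := by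
    exact_mod_cast hd
  field_simp
  linear_combination this


end pos
lemma alt_bounds : ∀ (m : ℕ) (e : ℕ → ℝ), (∀ j, 0 < e j) → (∀ j, e (j+1) < e j) →
    0 ≤ ∑ j ∈ Finset.range m, (-1:ℝ)^j * e j ∧
    (∑ j ∈ Finset.range m, (-1:ℝ)^j * e j ≤ e 0) ∧
    (2 ≤ m → e 0 - e 1 ≤ ∑ j ∈ Finset.range m, (-1:ℝ)^j * e j) := by
  intro m
  induction m with
  | zero =>
    intro e hp _
    simp only [Finset.range_zero, Finset.sum_empty]
    exact ⟨le_refl _, (hp 0).le, by omega⟩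
  | succ m ih =>
    intro e hp hd
    have key : ∑ j ∈ Finset.range (m+1), (-1:ℝ)^j * e j
        = e 0 - ∑ j ∈ Finset.range m, (-1:ℝ)^j * e (j+1) := by
      rw [Finset.sum_range_succ' (fun j => (-1:ℝ)^j * e j) m]
      have : ∀ j, (-1:ℝ)^(j+1) * e (j+1) = -((-1:ℝ)^j * e (j+1)) := by
        intro j; rw [pow_succ]; ring
      simp_rw [this]
      rw [Finset.sum_neg_distrib]
      ring
    obtain ⟨h1, h2, h3⟩ := ih (fun j => e (j+1)) (fun j => hp (j+1)) (fun j => hd (j+1))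
    rw [key]
    exact ⟨by linarith [hd 0], by linarith, fun _ => by linarith⟩


noncomputable def dd (b : ℕ → ℕ) (n : ℕ) : ℝ := ((qd b n : ℝ) * qd b (n+1))⁻¹

section pos
variable {b : ℕ → ℕ} (hb : ∀ i, 0 < b i)
include hb

lemma dd_pos (n : ℕ) : 0 < dd b n := by
  have h1 : (0:ℝ) < qd b n := by exact_mod_cast qd_pos hb n
  have h2 : (0:ℝ) < qd b (n+1) := by exact_mod_cast qd_pos hb (n+1)
  exact inv_pos.2 (by positivity)

lemma dd_dec (n : ℕ) : dd b (n+1) < dd b n := by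
  have h1 : (0:ℝ) < qd b n := by exact_mod_cast qd_pos hb n
  have h2 : (0:ℝ) < qd b (n+1) := by exact_mod_cast qd_pos hb (n+1)
  have h3 : (0:ℝ) < qd b (n+2) := by exact_mod_cast qd_pos hb (n+2)
  have h4 : (qd b n : ℝ) < qd b (n+2) := by exact_mod_cast qd_lt_two hb n
  apply inv_strictAnti₀
  · positivity
  · nlinarith

lemma telescope (n : ℕ) (hn : 1 ≤ n) : ∀ m,
    (-1:ℝ)^n * (rv b (n+m) - rv b n) = ∑ j ∈ Finset.range m, (-1:ℝ)^j * dd b (n+j)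
  | 0 => by simp
  | (m+1) => by
    have ih := telescope n hn m
    have hdiff := rv_diff hb (n+m) (by omega)
    rw [Finset.sum_range_succ, ← ih]
    have heq : rv b (n+(m+1)) - rv b n = (rv b (n+m) - rv b n) + ((-1:ℝ)^(n+m) / ((qd b (n+m) : ℝ) * qd b (n+m+1))) := by
      have e : n + (m+1) = n + m + 1 := by omega
      rw [e, ← hdiff]; ring
    have hsq : ((-1:ℝ))^n * (-1)^(n+m) = (-1)^m := by
      rw [pow_add, ← mul_assoc, ← mul_pow]; norm_num
    rw [heq]
    unfold dd
    rw [mul_add]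
    congr 1
    rw [div_eq_mul_inv, ← mul_assoc, hsq]

lemma close {x : ℝ} (hx : Tendsto (rv b) atTop (nhds x)) (n : ℕ) (hn : 1 ≤ n) :
    0 < (-1:ℝ)^n * (x - rv b n) ∧ (-1:ℝ)^n * (x - rv b n) ≤ dd b n := by
  have hlim : Tendsto (fun m => (-1:ℝ)^n * (rv b (n+m) - rv b n)) atTop
      (nhds ((-1:ℝ)^n * (x - rv b n))) := by
    apply Tendsto.const_mul
    apply Tendsto.sub_const
    exact hx.comp (tendsto_add_atTop_nat n |>.comp tendsto_id) |>.congr (by intro m; simp [Nat.add_comm])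
  have hb1 : ∀ m, (-1:ℝ)^n * (rv b (n+m) - rv b n) ≤ dd b n := by
    intro m
    rw [telescope hb n hn m]
    have := alt_bounds m (fun j => dd b (n+j)) (fun j => dd_pos hb _)
      (fun j => dd_dec hb (n+j))
    simpa only [Nat.add_zero] using this.2.1
  have hb2 : ∀ m, 2 ≤ m → dd b n - dd b (n+1) ≤ (-1:ℝ)^n * (rv b (n+m) - rv b n) := by
    intro m hm
    rw [telescope hb n hn m]
    have := alt_bounds m (fun j => dd b (n+j)) (fun j => dd_pos hb _)
      (fun j => dd_dec hb (n+j))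
    simpa only [Nat.add_zero] using this.2.2 hm
  constructor
  · have hge : dd b n - dd b (n+1) ≤ (-1:ℝ)^n * (x - rv b n) := by
      apply ge_of_tendsto hlim
      filter_upwards [eventually_ge_atTop 2] with m hm using hb2 m hm
    have := dd_dec hb n
    linarith
  · exact le_of_tendsto hlim (Eventually.of_forall hb1)


end pos

section pos
variable {b : ℕ → ℕ} (hb : ∀ i, 0 < b i)
include hb

lemma exists_lim : ∃ x, Tendsto (rv b) atTop (nhds x) := by
  apply cauchySeq_tendsto_of_complete
  apply cauchySeq_of_summable_dist
  have hsum : Summable (fun k : ℕ => 2 / ((k:ℝ)+1)^2) := by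
    have h0 : Summable (fun k : ℕ => 1 / ((k:ℝ))^2) := by
      exact_mod_cast Real.summable_one_div_nat_pow.2 (by norm_num)
    have h1 : Summable (fun k : ℕ => 1 / ((k:ℝ)+1)^2) := by
      have := (summable_nat_add_iff 1).2 h0
      apply this.congr
      intro k; push_cast; ring_nf
    simpa [div_eq_mul_inv, mul_comm] using h1.mul_left 2
  apply Summable.of_nonneg_of_le (fun k => dist_nonneg) _ hsum
  intro k
  have hq1 : (0:ℝ) < qd b k := by exact_mod_cast qd_pos hb k
  have hq2 : (0:ℝ) < qd b (k+1) := by exact_mod_cast qd_pos hb (k+1)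
  cases Nat.eq_zero_or_pos k with
  | inl h =>
    subst h
    have h1 : rv b 0 = 1 := by rw [rv_eq, qd_zero, pnum_zero]; norm_num
    have h2 : rv b 1 = 1 / (b 0 : ℝ) := by rw [rv_eq, qd_one, pnum_one]; norm_num
    have hb0 : (1:ℝ) ≤ b 0 := by exact_mod_cast hb 0
    have h3 : 0 < 1 / (b 0 : ℝ) := by positivity
    have h4 : 1 / (b 0 : ℝ) ≤ 1 := by
      rw [div_le_one (by linarith)]; linarith
    rw [Real.dist_eq, h1, show rv b (Nat.succ 0) = 1/(b 0:ℝ) from h2,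
      abs_of_nonneg (by linarith)]
    have h5 : 0 ≤ (b 0:ℝ)⁻¹ := by positivity
    norm_num
    linarith
  | inr h =>
    have e := rv_diff hb k h
    show |rv b k - rv b (k+1)| ≤ 2 / ((k:ℝ)+1)^2
    have habs : |rv b k - rv b (k+1)| = ((qd b k:ℝ) * qd b (k+1))⁻¹ := by
      rw [abs_sub_comm, e, abs_div, abs_pow, abs_neg, abs_one, one_pow,
        abs_of_pos (by positivity), one_div]
    rw [habs, show ((qd b k:ℝ) * qd b (k+1))⁻¹ = 1/((qd b k:ℝ)*qd b (k+1)) from (one_div _).symm,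
      div_le_div_iff₀ (by positivity) (by positivity)]
    have c1 : (k:ℝ) ≤ qd b k := by exact_mod_cast self_le_qd hb k
    have c2 : (k:ℝ)+1 ≤ qd b (k+1) := by exact_mod_cast self_le_qd hb (k+1)
    have c3 : (1:ℝ) ≤ k := by exact_mod_cast h
    nlinarith

lemma abs_sub_rv_le {x : ℝ} (hx : Tendsto (rv b) atTop (nhds x)) (n : ℕ) (hn : 1 ≤ n) :
    |x - rv b n| ≤ dd b n := by
  obtain ⟨h1, h2⟩ := close hb hx n hn
  have habs : |x - rv b n| = (-1:ℝ)^n * (x - rv b n) := by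
    have h3 : |(-1:ℝ)^n * (x - rv b n)| = |x - rv b n| := by
      rw [abs_mul, abs_pow, abs_neg, abs_one, one_pow, one_mul]
    rw [← h3, abs_of_pos h1]
  rw [habs]; exact h2

lemma rv_ne {x : ℝ} (hx : Tendsto (rv b) atTop (nhds x)) (n : ℕ) (hn : 1 ≤ n) :
    x ≠ rv b n := by
  obtain ⟨h1, _⟩ := close hb hx n hn
  intro he
  rw [← he] at h1
  simp at h1

lemma lim_irrational {x : ℝ} (hx : Tendsto (rv b) atTop (nhds x)) : Irrational x := by
  rw [Irrational]
  intro ⟨u, hu⟩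
  set n := u.den + 1 with hn
  have hn1 : 1 ≤ n := by omega
  have hq1 : (0:ℝ) < qd b n := by exact_mod_cast qd_pos hb n
  have hq2 : (0:ℝ) < qd b (n+1) := by exact_mod_cast qd_pos hb (n+1)
  have hd1 : (0:ℝ) < u.den := by exact_mod_cast u.pos
  have hne : x ≠ rv b n := rv_ne hb hx n hn1
  have hclose : |x - rv b n| ≤ ((qd b n:ℝ) * qd b (n+1))⁻¹ := abs_sub_rv_le hb hx n hn1
  -- the numerator of the difference is a nonzero integer
  have hkey : (u.num * qd b n - pnum b n * u.den : ℤ) ≠ 0 := by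
    intro h0
    apply hne
    rw [← hu, rv_eq, Rat.cast_def]
    have h0' : (u.num * (qd b n : ℤ) : ℤ) = (pnum b n : ℤ) * u.den := by omega
    have h0r : (u.num : ℝ) * qd b n = (pnum b n : ℝ) * u.den := by exact_mod_cast h0'
    rw [div_eq_div_iff (by exact hd1.ne') (by positivity)]
    linarith
  have hge : (1:ℝ) ≤ |(u.num * qd b n - pnum b n * u.den : ℤ)| := by
    exact_mod_cast Int.one_le_abs (by exact_mod_cast hkey)
  have hdiff : |x - rv b n| = |(u.num * qd b n - pnum b n * u.den : ℤ)| / ((u.den : ℝ) * qd b n) := by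
    rw [← hu, rv_eq, Rat.cast_def]
    rw [div_sub_div _ _ (by positivity) (by positivity), abs_div]
    congr 1
    · push_cast; ring_nf
    · rw [abs_of_pos (by positivity)]
  have hlow : (1:ℝ) / ((u.den:ℝ) * qd b n) ≤ |x - rv b n| := by
    rw [hdiff]
    gcongr
  have hden : (u.den : ℝ) < qd b (n+1) := by
    have : n + 1 ≤ qd b (n+1) := self_le_qd hb (n+1)
    have : ((n:ℝ)+1) ≤ qd b (n+1) := by exact_mod_cast this
    have : ((u.den:ℝ)+2) ≤ qd b (n+1) := by rw [hn] at this; push_cast at this; linarith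
    linarith
  have : (1:ℝ) / ((u.den:ℝ) * qd b n) ≤ ((qd b n:ℝ) * qd b (n+1))⁻¹ := le_trans hlow hclose
  rw [← one_div ((qd b n:ℝ) * qd b (n+1))] at this
  rw [div_le_div_iff₀ (by positivity) (by positivity)] at this
  nlinarith

lemma lim_mem_Ioo {x : ℝ} (hx : Tendsto (rv b) atTop (nhds x)) : x ∈ Set.Ioo (0:ℝ) 1 := by
  obtain ⟨h1, _⟩ := close hb hx 1 le_rfl
  obtain ⟨h2, _⟩ := close hb hx 2 (by omega)
  have e1 : rv b 1 = 1 / (b 0:ℝ) := by rw [rv_eq, qd_one, pnum_one]; norm_num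
  have e2 : 0 < rv b 2 := by
    rw [rv_eq]
    have p1 : (0:ℝ) < pnum b 2 := by exact_mod_cast pnum_pos hb 2
    have p2 : (0:ℝ) < qd b 2 := by exact_mod_cast qd_pos hb 2
    positivity
  have hb0 : (1:ℝ) ≤ b 0 := by exact_mod_cast hb 0
  have hr1 : rv b 1 ≤ 1 := by rw [e1, div_le_one (by linarith)]; linarith
  norm_num at h1 h2
  exact ⟨by linarith, by linarith⟩


end pos
noncomputable def Qval (b : ℕ → ℕ) : ℝ :=
  ∑' k : ℕ, (-1 : ℝ) ^ k * (2 : ℝ) ^ ((1 : ℤ) - (cfSum b (k+1) : ℤ))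

lemma cfSum_ge (b : ℕ → ℕ) (hb : ∀ i, 0 < b i) (m : ℕ) : m ≤ cfSum b m := by
  unfold cfSum
  calc m = ∑ _i ∈ Finset.range m, 1 := by simp
  _ ≤ _ := Finset.sum_le_sum (fun i _ => hb i)

lemma qsummable (b : ℕ → ℕ) (hb : ∀ i, 0 < b i) :
    Summable (fun k : ℕ => (-1 : ℝ) ^ k * (2 : ℝ) ^ ((1 : ℤ) - (cfSum b (k+1) : ℤ))) := by
  apply Summable.of_norm_bounded (g := fun k : ℕ => (1/2 : ℝ)^k)
  · exact summable_geometric_of_lt_one (by norm_num) (by norm_num)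
  · intro k
    have h1 : ‖(-1 : ℝ) ^ k * (2 : ℝ) ^ ((1 : ℤ) - (cfSum b (k+1) : ℤ))‖
        = (2 : ℝ) ^ ((1 : ℤ) - (cfSum b (k+1) : ℤ)) := by
      rw [norm_mul, norm_pow, norm_neg, norm_one, one_pow, one_mul,
        Real.norm_eq_abs, abs_of_pos (by positivity)]
    rw [h1]
    have h2 : ((1:ℤ) - (cfSum b (k+1) : ℤ)) ≤ -(k:ℤ) := by
      have := cfSum_ge b hb (k+1)
      omega
    calc (2 : ℝ) ^ ((1 : ℤ) - (cfSum b (k+1) : ℤ)) ≤ (2:ℝ) ^ (-(k:ℤ)) := by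
          apply zpow_le_zpow_right₀ (by norm_num) h2
    _ = (1/2:ℝ)^k := by
          rw [zpow_neg, zpow_natCast, one_div, inv_pow]

def c1 (a : ℕ → ℕ) (n : ℕ) : ℕ → ℕ := fun k => if k < n then a k else 1
def c2 (a : ℕ → ℕ) (n : ℕ) : ℕ → ℕ := fun k => if k < n then a k else if k = n then 2 else 1

lemma c1_pos (a : ℕ → ℕ) (ha : ∀ i, 0 < a i) (n : ℕ) : ∀ i, 0 < c1 a n i := by
  intro i; unfold c1; split
  · exact ha i
  · norm_num

lemma c2_pos (a : ℕ → ℕ) (ha : ∀ i, 0 < a i) (n : ℕ) : ∀ i, 0 < c2 a n i := by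
  intro i; unfold c2; split
  · exact ha i
  · split <;> norm_num

lemma cfSum_c1_lt (a : ℕ → ℕ) (n m : ℕ) (hm : m ≤ n) : cfSum (c1 a n) m = cfSum a m := by
  apply Finset.sum_congr rfl
  intro i hi
  rw [Finset.mem_range] at hi
  simp [c1, show i < n by omega]

lemma cfSum_c2_lt (a : ℕ → ℕ) (n m : ℕ) (hm : m ≤ n) : cfSum (c2 a n) m = cfSum a m := by
  apply Finset.sum_congr rfl
  intro i hi
  rw [Finset.mem_range] at hi
  simp [c2, show i < n by omega]

lemma cfSum_tail (n : ℕ) (b : ℕ → ℕ) (m : ℕ) (hm : n ≤ m) :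
    cfSum b m = cfSum b n + ∑ i ∈ Finset.Ico n m, b i := by
  unfold cfSum
  rw [Finset.range_eq_Ico]
  rw [← Finset.sum_Ico_consecutive _ (Nat.zero_le n) hm]
  rw [Finset.range_eq_Ico]

lemma cfSum_c1_ge (a : ℕ → ℕ) (n j : ℕ) : cfSum (c1 a n) (n + j) = cfSum a n + j := by
  rw [cfSum_tail n _ (n+j) (by omega), cfSum_c1_lt a n n le_rfl]
  have h : ∑ i ∈ Finset.Ico n (n+j), c1 a n i = j := by
    have : ∀ i ∈ Finset.Ico n (n+j), c1 a n i = 1 := by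
      intro i hi
      rw [Finset.mem_Ico] at hi
      simp [c1, show ¬ (i < n) by omega]
    rw [Finset.sum_congr rfl this]
    simp
  omega

lemma cfSum_c2_ge (a : ℕ → ℕ) (n j : ℕ) (hj : 1 ≤ j) :
    cfSum (c2 a n) (n + j) = cfSum a n + j + 1 := by
  rw [cfSum_tail n _ (n+j) (by omega), cfSum_c2_lt a n n le_rfl]
  have h : ∑ i ∈ Finset.Ico n (n+j), c2 a n i = j + 1 := by
    rw [Finset.sum_eq_sum_Ico_succ_bot (by omega : n < n + j)]
    have : ∀ i ∈ Finset.Ico (n+1) (n+j), c2 a n i = 1 := by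
      intro i hi
      rw [Finset.mem_Ico] at hi
      simp [c2, show ¬ (i < n) by omega, show i ≠ n by omega]
    rw [Finset.sum_congr rfl this]
    simp [c2]
    omega
  omega

lemma Qval_diff (a : ℕ → ℕ) (ha : ∀ i, 0 < a i) (n : ℕ) :
    Qval (c1 a n) - Qval (c2 a n)
      = (-1:ℝ)^n * (2:ℝ)^(-(cfSum a n : ℤ)) / 3 := by
  have hs1 := qsummable (c1 a n) (c1_pos a ha n)
  have hs2 := qsummable (c2 a n) (c2_pos a ha n)
  set g1 := fun k : ℕ => (-1 : ℝ) ^ k * (2 : ℝ) ^ ((1 : ℤ) - (cfSum (c1 a n) (k+1) : ℤ)) with hg1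
  set g2 := fun k : ℕ => (-1 : ℝ) ^ k * (2 : ℝ) ^ ((1 : ℤ) - (cfSum (c2 a n) (k+1) : ℤ)) with hg2
  have hD : Qval (c1 a n) - Qval (c2 a n) = ∑' k, (g1 k - g2 k) := (Summable.tsum_sub hs1 hs2).symm
  have hDsum : Summable (fun k => g1 k - g2 k) := hs1.sub hs2
  rw [hD]
  rw [← Summable.sum_add_tsum_nat_add n hDsum]
  have hzero : ∀ i ∈ Finset.range n, g1 i - g2 i = 0 := by
    intro i hi
    rw [Finset.mem_range] at hi
    rw [hg1, hg2]
    simp only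
    rw [cfSum_c1_lt a n (i+1) (by omega), cfSum_c2_lt a n (i+1) (by omega)]
    ring
  rw [Finset.sum_eq_zero hzero, zero_add]
  have hterm : ∀ j : ℕ, g1 (j + n) - g2 (j + n)
      = ((-1:ℝ)^n * (2:ℝ)^(-(cfSum a n : ℤ) - 1)) * (-1/2 : ℝ)^j := by
    intro j
    rw [hg1, hg2]
    simp only
    have e1 : j + n + 1 = n + (j + 1) := by omega
    rw [e1, cfSum_c1_ge a n (j+1), cfSum_c2_ge a n (j+1) (by omega)]
    have z1 : (1:ℤ) - ((cfSum a n + (j+1) : ℕ) : ℤ)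
        = ((-(cfSum a n:ℤ) - 1) + (-(j:ℤ))) + 1 := by push_cast; ring
    have z2 : (1:ℤ) - ((cfSum a n + (j+1) + 1 : ℕ) : ℤ)
        = (-(cfSum a n:ℤ) - 1) + (-(j:ℤ)) := by push_cast; ring
    rw [z1, z2]
    have hA : ∀ A : ℤ, (2:ℝ)^(A + 1) - (2:ℝ)^A = (2:ℝ)^A := by
      intro A
      rw [zpow_add₀ (by norm_num : (2:ℝ) ≠ 0), zpow_one]; ring
    have split : (-1:ℝ)^(j+n) * (2:ℝ)^(((-(cfSum a n:ℤ) - 1) + (-(j:ℤ))) + 1)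
        - (-1:ℝ)^(j+n) * (2:ℝ)^((-(cfSum a n:ℤ) - 1) + (-(j:ℤ)))
        = (-1:ℝ)^(j+n) * (2:ℝ)^((-(cfSum a n:ℤ) - 1) + (-(j:ℤ))) := by
      rw [← mul_sub, hA]
    rw [split]
    have hr : (-1/2:ℝ)^j = (-1:ℝ)^j * (2:ℝ)^(-(j:ℤ)) := by
      rw [zpow_neg, zpow_natCast, ← inv_pow, ← mul_pow]
      norm_num
    rw [hr, pow_add, zpow_add₀ (by norm_num : (2:ℝ) ≠ 0)]
    ring
  rw [tsum_congr hterm, tsum_mul_left, tsum_geometric_of_norm_lt_one (by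
    rw [Real.norm_eq_abs, abs_div, abs_neg, abs_one]; norm_num)]
  have h2S : (2:ℝ)^(-(cfSum a n:ℤ) - 1) = (2:ℝ)^(-(cfSum a n:ℤ)) / 2 := by
    rw [zpow_sub₀ (by norm_num : (2:ℝ) ≠ 0), zpow_one]
  rw [h2S]
  norm_num
  ring


end S11

/- If `?'(x) = 0`, then for every `c > 0`, for all large `t` and every partition of
`(a_1,…,a_t)` into consecutive blocks `B_1,…,B_m`, one has
`∏_j ⟨B_j⟩ < c (√2)^{S_x(t)}`. -/

open S11 in
/-- If `?'(x) = 0`, then for every `c > 0`, for all large `t` and every partition of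
`(a_1,…,a_t)` into consecutive blocks `B_1,…,B_m`, one has
`∏_j ⟨B_j⟩ < c (√2)^{S_x(t)}`. -/
theorem stmt11 (x : ℝ) (hx : x ∈ Set.Ioo (0:ℝ) 1) (hirr : Irrational x)
    (a : ℕ → ℕ) (ha : IsCFOf x a)
    (Q : ℝ → ℝ) (hQ : IsMinkowski Q) (hder : HasDerivAt Q 0 x) :
    ∀ c : ℝ, 0 < c → ∃ T : ℕ, ∀ t : ℕ, T ≤ t →
      ∀ L : List (List ℕ), L.flatten = (List.range t).map a → (∀ B ∈ L, B ≠ []) →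
        (L.map (fun B => (cont B : ℝ))).prod < c * (Real.sqrt 2) ^ (cfSum a t) := by
  intro c hc
  have hapos := ha.1
  have hxa : Tendsto (rv a) atTop (nhds x) := ha.2
  -- extract ε-δ property from the derivative
  set ε : ℝ := c^2/48 with hε_def
  have hε : 0 < ε := by positivity
  have hlo := (hasDerivAt_iff_isLittleO.1 hder).def hε
  simp only [smul_zero, sub_zero] at hlo
  rw [Metric.eventually_nhds_iff] at hlo
  obtain ⟨δ, hδ, hclose⟩ := hlo
  obtain ⟨T0, hT0⟩ := exists_nat_gt (2/δ)
  refine ⟨T0 + 1, ?_⟩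
  intro t ht L hL hLne
  have ht1 : 1 ≤ t := by omega
  have htR : (2:ℝ)/δ < t := by
    calc (2:ℝ)/δ < T0 := hT0
    _ ≤ t := by exact_mod_cast Nat.le_of_succ_le ht
  -- the two auxiliary irrationals
  obtain ⟨y1, hy1⟩ := exists_lim (c1_pos a hapos t)
  obtain ⟨y2, hy2⟩ := exists_lim (c2_pos a hapos t)
  have hQy1 : Q y1 = Qval (c1 a t) :=
    hQ.2.2.2.2 y1 (lim_mem_Ioo (c1_pos a hapos t) hy1) (lim_irrational (c1_pos a hapos t) hy1)
      (c1 a t) ⟨c1_pos a hapos t, hy1⟩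
  have hQy2 : Q y2 = Qval (c2 a t) :=
    hQ.2.2.2.2 y2 (lim_mem_Ioo (c2_pos a hapos t) hy2) (lim_irrational (c2_pos a hapos t) hy2)
      (c2 a t) ⟨c2_pos a hapos t, hy2⟩
  -- common denominator
  set Qt : ℝ := (qd a t : ℝ) with hQt_def
  have hQt0 : 0 < Qt := by rw [hQt_def]; exact_mod_cast qd_pos hapos t
  have hQt1 : (1:ℝ) ≤ Qt := by rw [hQt_def]; exact_mod_cast qd_pos hapos t
  have hQtt : (t:ℝ) ≤ Qt := by rw [hQt_def]; exact_mod_cast self_le_qd hapos t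
  -- first t quotients agree
  have hmap1 : (List.range t).map (c1 a t) = (List.range t).map a := by
    apply List.map_congr_left
    intro i hi
    rw [List.mem_range] at hi
    simp [c1, hi]
  have hmap2 : (List.range t).map (c2 a t) = (List.range t).map a := by
    apply List.map_congr_left
    intro i hi
    rw [List.mem_range] at hi
    simp [c2, hi]
  have hrv1 : rv (c1 a t) t = rv a t := by rw [rv, rv, hmap1]
  have hrv2 : rv (c2 a t) t = rv a t := by rw [rv, rv, hmap2]
  have hqd1 : qd (c1 a t) t = qd a t := by rw [qd, qd, hmap1]
  have hqd2 : qd (c2 a t) t = qd a t := by rw [qd, qd, hmap2]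
  -- distance bounds
  have hdd : ∀ b : ℕ → ℕ, (∀ i, 0 < b i) → qd b t = qd a t → dd b t ≤ (Qt^2)⁻¹ := by
    intro b hb hq
    rw [dd, hq]
    apply inv_anti₀ (by positivity)
    have h1 : (qd a t : ℝ) ≤ qd b (t+1) := by
      exact_mod_cast hq ▸ qd_le_succ hb t
    calc Qt^2 = Qt * Qt := sq Qt ▸ rfl
    _ ≤ Qt * (qd b (t+1) : ℝ) := by
        apply mul_le_mul_of_nonneg_left h1 hQt0.le
  have hdist : ∀ (b : ℕ → ℕ) (hb : ∀ i, 0 < b i) (y : ℝ), Tendsto (rv b) atTop (nhds y) →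
      qd b t = qd a t → rv b t = rv a t → |y - x| ≤ 2/Qt^2 := by
    intro b hb y hy hq hr
    have h1 : |y - rv b t| ≤ dd b t := abs_sub_rv_le hb hy t ht1
    have h2 : |x - rv a t| ≤ dd a t := abs_sub_rv_le hapos hxa t ht1
    have h3 := hdd b hb hq
    have h4 := hdd a hapos rfl
    calc |y - x| = |(y - rv b t) - (x - rv a t)| := by rw [hr]; ring_nf
    _ ≤ |y - rv b t| + |x - rv a t| := abs_sub _ _
    _ ≤ (Qt^2)⁻¹ + (Qt^2)⁻¹ := by linarith
    _ = 2/Qt^2 := by rw [div_eq_mul_inv]; ring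
  have hdist1 := hdist (c1 a t) (c1_pos a hapos t) y1 hy1 hqd1 hrv1
  have hdist2 := hdist (c2 a t) (c2_pos a hapos t) y2 hy2 hqd2 hrv2
  -- close enough for the derivative bound
  have hsmall : 2/Qt^2 < δ := by
    have h1 : 2/Qt^2 ≤ 2/Qt := by
      apply div_le_div_of_nonneg_left (by norm_num) hQt0
      nlinarith
    have h2 : 2/Qt ≤ 2/(t:ℝ) := by
      apply div_le_div_of_nonneg_left (by norm_num) (by positivity) hQtt
    have ht0 : (0:ℝ) < t := by exact_mod_cast ht1
    have h3 : 2/(t:ℝ) < δ := by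
      rw [div_lt_iff₀ ht0]
      rw [div_lt_iff₀ hδ] at htR
      linarith
    linarith
  have hQxv : Q x = Qval a := hQ.2.2.2.2 x hx hirr a ha
  have hder1 : |Q y1 - Q x| ≤ ε * |y1 - x| := by
    have := hclose (y := y1) (by rw [Real.dist_eq]; linarith)
    simpa [Real.norm_eq_abs] using this
  have hder2 : |Q y2 - Q x| ≤ ε * |y2 - x| := by
    have := hclose (y := y2) (by rw [Real.dist_eq]; linarith)
    simpa [Real.norm_eq_abs] using this
  -- the Q-value gap
  set S : ℕ := cfSum a t with hS_def
  have hgap : (2:ℝ)^(-(S:ℤ))/3 ≤ 4*ε/Qt^2 := by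
    have hd := Qval_diff a hapos t
    have habs : |Qval (c1 a t) - Qval (c2 a t)| = (2:ℝ)^(-(S:ℤ))/3 := by
      rw [hd, abs_div, abs_mul, abs_pow, abs_neg, abs_one, one_pow, one_mul,
        abs_of_pos (by positivity : (0:ℝ) < (2:ℝ)^(-(cfSum a t:ℤ)))]
      norm_num
      exact hS_def.symm
    have htri : |Qval (c1 a t) - Qval (c2 a t)| ≤ ε * |y1 - x| + ε * |y2 - x| := by
      rw [← hQy1, ← hQy2]
      calc |Q y1 - Q y2| = |(Q y1 - Q x) - (Q y2 - Q x)| := by ring_nf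
      _ ≤ |Q y1 - Q x| + |Q y2 - Q x| := abs_sub _ _
      _ ≤ _ := add_le_add hder1 hder2
    rw [habs] at htri
    have h1 : ε * |y1 - x| ≤ ε * (2/Qt^2) := by
      apply mul_le_mul_of_nonneg_left hdist1 hε.le
    have h2 : ε * |y2 - x| ≤ ε * (2/Qt^2) := by
      apply mul_le_mul_of_nonneg_left hdist2 hε.le
    calc (2:ℝ)^(-(S:ℤ))/3 ≤ ε * (2/Qt^2) + ε * (2/Qt^2) := by linarith
    _ = 4*ε/Qt^2 := by ring
  -- convert to Qt² ≤ (c²/4)·2^S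
  have hpow : (0:ℝ) < (2:ℝ)^(S:ℕ) := by positivity
  have hQt2 : Qt^2 ≤ c^2/4 * (2:ℝ)^(S:ℕ) := by
    have hz : (2:ℝ)^(-(S:ℤ)) = ((2:ℝ)^(S:ℕ))⁻¹ := by
      rw [zpow_neg, zpow_natCast]
    have key : Qt^2 * (2:ℝ)^(-(S:ℤ)) ≤ 12*ε := by
      have h1 : Qt^2 * ((2:ℝ)^(-(S:ℤ))/3) ≤ Qt^2 * (4*ε/Qt^2) :=
        mul_le_mul_of_nonneg_left hgap (by positivity)
      have h2 : Qt^2 * (4*ε/Qt^2) = 4*ε := by field_simp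
      nlinarith [h1, h2]
    have h3 : Qt^2 = Qt^2 * (2:ℝ)^(-(S:ℤ)) * (2:ℝ)^(S:ℕ) := by
      rw [hz, mul_assoc, inv_mul_cancel₀ hpow.ne', mul_one]
    calc Qt^2 = Qt^2 * (2:ℝ)^(-(S:ℤ)) * (2:ℝ)^(S:ℕ) := h3
    _ ≤ (12*ε) * (2:ℝ)^(S:ℕ) := mul_le_mul_of_nonneg_right key hpow.le
    _ = c^2/4 * (2:ℝ)^(S:ℕ) := by rw [hε_def]; ring
  -- take square roots
  have hsq2 : ((Real.sqrt 2)^(S:ℕ))^2 = (2:ℝ)^(S:ℕ) := by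
    rw [← pow_mul, mul_comm, pow_mul, Real.sq_sqrt (by norm_num : (0:ℝ) ≤ 2)]
  have hsqrt_pos : (0:ℝ) < (Real.sqrt 2)^(S:ℕ) := by positivity
  have hfin : Qt ≤ c/2 * (Real.sqrt 2)^(S:ℕ) := by
    have h1 : Qt^2 ≤ (c/2 * (Real.sqrt 2)^(S:ℕ))^2 := by
      calc Qt^2 ≤ c^2/4 * (2:ℝ)^(S:ℕ) := hQt2
      _ = (c/2 * (Real.sqrt 2)^(S:ℕ))^2 := by rw [mul_pow, hsq2]; ring
    have h2 : 0 ≤ c/2 * (Real.sqrt 2)^(S:ℕ) := by positivity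
    have h3 := Real.sqrt_le_sqrt h1
    rwa [Real.sqrt_sq hQt0.le, Real.sqrt_sq h2] at h3
  -- product of blocks
  have hprod : (L.map (fun B => (cont B : ℝ))).prod ≤ Qt := by
    have h1 : ((L.map cont).prod : ℕ) ≤ cont L.flatten := prod_le_cont_flatten L
    rw [hL] at h1
    have h2 : ((L.map cont).prod : ℝ) ≤ ((cont ((List.range t).map a) : ℕ) : ℝ) := by
      exact_mod_cast h1
    have h3 : Qt = ((cont ((List.range t).map a) : ℕ) : ℝ) := rfl
    rw [h3]
    calc (L.map (fun B => (cont B : ℝ))).prod = ((L.map cont).prod : ℝ) := by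
          rw [Nat.cast_list_prod, List.map_map]; rfl
    _ ≤ _ := h2
  calc (L.map (fun B => (cont B : ℝ))).prod ≤ Qt := hprod
  _ ≤ c/2 * (Real.sqrt 2)^(S:ℕ) := hfin
  _ < c * (Real.sqrt 2)^(S:ℕ) := by
      have : c/2 * (Real.sqrt 2)^(S:ℕ) < c * (Real.sqrt 2)^(S:ℕ) := by
        apply mul_lt_mul_of_pos_right _ hsqrt_pos
        linarith
      exact this
end
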